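/- arXiv:1104.3334 — 7 statements merged into one kernel-verified Lean document; each statement's English description precedes it below -/
import Mathlib

section
/- Let G be a graph on n vertices with independence number α(G) ≤ k, and let W be a set of vertices of G. If, for some integer i with 1 ≤ i ≤ 12k, the graph G contains a cycle of length n − i passing through every vertex of W such that every vertex not on this cycle has degree at least 13k in G, then G contains a cycle of length n − 1 passing through every vertex of W. -/
/-- `IndepLE G k` means the independence number of `G` is at most `k`:
every set of pairwise non-adjacent vertices has size at most `k`. -/
def IndepLE {V : Type*} (G : SimpleGraph V) (k : ℕ) : Prop :=
  ∀ s : Finset V, (∀ u ∈ s, ∀ v ∈ s, u ≠ v → ¬ G.Adj u v) → s.card ≤ k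

section Helpers

open SimpleGraph Walk

variable {V : Type*} {G : SimpleGraph V}

lemma myFirstDart_mem {u v : V} (p : G.Walk u v) (hp : ¬ p.Nil) :
    (⟨(u, p.getVert 1), p.adj_snd hp⟩ : G.Dart) ∈ p.darts := by
  cases p with
  | nil => simp at hp
  | cons h q =>
    rw [Walk.darts_cons, List.mem_cons]
    left
    ext
    · rfl
    · simp

lemma exists_dart_fst_aux {a b : V} (p : G.Walk a b) :
    ∀ u ∈ p.support, u = b ∨ ∃ d ∈ p.darts, d.fst = u := by
  induction p with
  | nil => intro u hu; left; simpa using hu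
  | @cons a c b h q ih =>
    intro u hu
    rcases List.mem_cons.mp (by simpa [Walk.support_cons] using hu) with rfl | hu'
    · exact Or.inr ⟨⟨(u, c), h⟩, by simp [Walk.darts_cons], rfl⟩
    · rcases ih u hu' with rfl | ⟨d, hd, hfst⟩
      · exact Or.inl rfl
      · exact Or.inr ⟨d, by simp [Walk.darts_cons, hd], hfst⟩

lemma exists_dart_fst {a : V} (p : G.Walk a a) (hp : ¬ p.Nil) {u : V} (h : u ∈ p.support) :
    ∃ d ∈ p.darts, d.fst = u := by
  rcases exists_dart_fst_aux p u h with rfl | h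
  · exact ⟨_, myFirstDart_mem p hp, rfl⟩
  · exact h

lemma length_rotate [DecidableEq V] {a u : V} (c : G.Walk a a) (h : u ∈ c.support) :
    (c.rotate u h).length = c.length := by
  have := congrArg Walk.length (c.take_spec h)
  rw [Walk.length_append] at this
  simp only [Walk.rotate, Walk.length_append]
  omega

lemma mem_support_closed_iff {a u : V} (c : G.Walk a a) (hc : ¬ c.Nil) :
    u ∈ c.support ↔ u ∈ c.support.tail := by
  constructor
  · intro h
    cases c with
    | nil => simp at hc
    | cons h' q =>
      rcases List.mem_cons.mp (by simpa [Walk.support_cons] using h) with rfl | h''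
      · simpa [Walk.support_cons] using q.end_mem_support
      · simpa [Walk.support_cons] using h''
  · intro h
    have := c.support_ne_nil
    exact List.mem_of_mem_tail h

lemma mem_support_rotate [DecidableEq V] {a u y : V} (c : G.Walk a a) (h : u ∈ c.support)
    (hc : ¬ c.Nil) : y ∈ (c.rotate u h).support ↔ y ∈ c.support := by
  have hr : ¬ (c.rotate u h).Nil := by
    rw [Walk.not_nil_iff_lt_length, _root_.length_rotate]
    rw [Walk.not_nil_iff_lt_length] at hc
    exact hc
  rw [mem_support_closed_iff _ hr, mem_support_closed_iff _ hc]
  exact (Walk.support_rotate c u h).perm.mem_iff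

lemma cycle_support_dropLast_nodup {a : V} {c : G.Walk a a} (hc : c.IsCycle) :
    c.support.dropLast.Nodup := by
  have htail : c.support.tail.Nodup := hc.2
  have hs : c.support = a :: c.support.tail := c.support_eq_cons
  set l := c.support.tail with hldef
  have hlen : l.length = c.length := by
    have := c.length_support
    have : c.support.length = l.length + 1 := by rw [hs]; simp
    omega
  have hl : l ≠ [] := by
    have h3 := hc.three_le_length
    intro h; rw [h] at hlen; simp at hlen; omega
  have hlast : l.getLast hl = a := by
    have e1 : c.support.getLast? = some a := by
      rw [List.getLast?_eq_getLast c.support_ne_nil]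
      exact congrArg some c.getLast_support
    rw [hs] at e1
    rw [List.getLast?_eq_getLast (by simp) ] at e1
    rw [List.getLast_cons hl] at e1
    exact Option.some_injective _ e1
  rw [hs, List.dropLast_cons_of_ne_nil hl, List.nodup_cons]
  constructor
  · intro hmem
    have hmem' : l.getLast hl ∈ l.dropLast := hlast ▸ hmem
    have hld := List.dropLast_append_getLast hl
    have htl := htail
    rw [← hld] at htl
    rcases List.nodup_append'.mp htl with ⟨-, -, hdisj⟩
    exact hdisj hmem' (by simp)
  · exact htail.sublist (List.dropLast_sublist l)

lemma dart_eq_of_fst_eq {a : V} {c : G.Walk a a} (hc : c.IsCycle)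
    {d₁ d₂ : G.Dart} (h₁ : d₁ ∈ c.darts) (h₂ : d₂ ∈ c.darts) (h : d₁.fst = d₂.fst) :
    d₁ = d₂ := by
  have hnd : (c.darts.map (·.fst)).Nodup := by
    rw [Walk.map_fst_darts]
    exact cycle_support_dropLast_nodup hc
  exact List.inj_on_of_nodup_map hnd h₁ h₂ h

lemma dart_eq_of_snd_eq {a : V} {c : G.Walk a a} (hc : c.IsCycle)
    {d₁ d₂ : G.Dart} (h₁ : d₁ ∈ c.darts) (h₂ : d₂ ∈ c.darts) (h : d₁.snd = d₂.snd) :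
    d₁ = d₂ := by
  have hnd : (c.darts.map (·.snd)).Nodup := by
    rw [Walk.map_snd_darts]
    exact hc.2
  exact List.inj_on_of_nodup_map hnd h₁ h₂ h

lemma insert_cycle {u x : V} (e : G.Walk u u) (he : e.IsCycle) (hx : x ∉ e.support)
    (h1 : G.Adj u x) (h2 : G.Adj x (e.getVert 1)) :
    ∃ c' : G.Walk u u, c'.IsCycle ∧ c'.length = e.length + 1 ∧ c'.support.Perm (x :: e.support) := by
  have hne : ¬ e.Nil := he.not_nil
  have hcons : Walk.cons (e.adj_snd hne) e.tail = e := e.cons_tail_eq hne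
  set P := e.tail with hP
  have hcyc := he
  rw [← hcons] at hcyc
  rw [Walk.cons_isCycle_iff] at hcyc
  obtain ⟨hPpath, hPe⟩ := hcyc
  have hxP : x ∉ P.support := by
    intro hmem
    apply hx
    rw [← hcons, Walk.support_cons]
    exact List.mem_cons_of_mem _ hmem
  refine ⟨Walk.cons h1 (Walk.cons h2 P), ?_, ?_, ?_⟩
  · rw [Walk.cons_isCycle_iff]
    constructor
    · rw [Walk.isPath_def, Walk.support_cons, List.nodup_cons]
      exact ⟨hxP, hPpath.support_nodup⟩
    · rw [Walk.edges_cons, List.mem_cons]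
      rintro (habs | habs)
      · rw [Sym2.eq_iff] at habs
        rcases habs with ⟨hux, hxw⟩ | ⟨huw, -⟩
        · exact hx (hux ▸ e.start_mem_support)
        · have : G.Adj u (e.getVert 1) := e.adj_snd hne
          rw [← huw] at this
          exact G.irrefl this
      · exact hxP (Walk.snd_mem_support_of_mem_edges P habs)
  · have : e.length = P.length + 1 := by
      conv_lhs => rw [← hcons]
      rw [Walk.length_cons]
    simp [Walk.length_cons, this]
  · have hsup : e.support = u :: P.support := by
      rw [e.support_eq_cons]
      rw [Walk.support_tail_of_not_nil e hne]
    rw [Walk.support_cons, Walk.support_cons, hsup]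
    exact List.Perm.swap _ _ _

lemma cross_cycle [DecidableEq V] {u x w v : V} (h : G.Adj u w) (P : G.Walk w u)
    (hPpath : P.IsPath) (hv : v ∈ P.support) (hvu : v ≠ u)
    (hx : x ∉ u :: P.support)
    (hxu : G.Adj u x) (hxv : G.Adj x v)
    (hcross : G.Adj w ((P.dropUntil v hv).getVert 1)) :
    ∃ c' : G.Walk u u, c'.IsCycle ∧ c'.length = P.length + 2 ∧
      c'.support.Perm (x :: u :: P.support) := by
  set r := P.dropUntil v hv with hrdef
  set q := P.takeUntil v hv with hqdef
  have hxu' : x ≠ u := fun hh => hx (by rw [hh]; exact List.mem_cons_self)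
  have hxP : x ∉ P.support := fun hh => hx (List.mem_cons_of_mem _ hh)
  have hnr : ¬ r.Nil := Walk.not_nil_of_ne hvu
  have hconsr : Walk.cons (r.adj_snd hnr) r.tail = r := r.cons_tail_eq hnr
  set z := r.getVert 1 with hzdef
  set r' := r.tail with hr'def
  have hspec : q.append r = P := P.take_spec hv
  have hPsup : P.support = q.support ++ r'.support := by
    rw [← hspec, Walk.support_append, Walk.support_tail_of_not_nil r hnr]
  have hPlen : P.length = q.length + r.length := by
    rw [← hspec, Walk.length_append]
  have hrlen : r'.length + 1 = r.length := Walk.length_tail_add_one hnr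
  have hPnodup : P.support.Nodup := hPpath.support_nodup
  -- the new cycle
  refine ⟨Walk.cons hxu (Walk.cons hxv (q.reverse.append (Walk.cons hcross r'))), ?_, ?_, ?_⟩
  · rw [Walk.cons_isCycle_iff]
    have hsupQ : (Walk.cons hxv (q.reverse.append (Walk.cons hcross r'))).support
        = x :: (q.support.reverse ++ r'.support) := by
      rw [Walk.support_cons, Walk.support_append, Walk.support_reverse, Walk.support_cons,
        List.tail_cons]
    constructor
    · rw [Walk.isPath_def, hsupQ, List.nodup_cons]
      constructor
      · intro hh
        apply hxP
        rw [hPsup]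
        rcases List.mem_append.mp hh with h' | h'
        · exact List.mem_append.mpr (Or.inl (List.mem_reverse.mp h'))
        · exact List.mem_append.mpr (Or.inr h')
      · have : (q.support.reverse ++ r'.support).Perm (q.support ++ r'.support) :=
          (q.support.reverse_perm).append_right _
        rw [this.nodup_iff, ← hPsup]
        exact hPnodup
    · rw [Walk.edges_cons, Walk.edges_append, Walk.edges_reverse, Walk.edges_cons]
      simp only [List.mem_cons, List.mem_append, List.mem_reverse]
      rintro (habs | habs | habs | habs)
      · rw [Sym2.eq_iff] at habs
        rcases habs with ⟨hux, -⟩ | ⟨huv, -⟩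
        · exact hxu' hux.symm
        · exact hvu huv.symm
      · exact hxP ((P.support_takeUntil_subset hv)
          (Walk.snd_mem_support_of_mem_edges q habs))
      · rw [Sym2.eq_iff] at habs
        rcases habs with ⟨huw, hxz⟩ | ⟨huz, hxw⟩
        · apply hxP
          rw [hxz, hzdef]
          have : r.getVert 1 ∈ r.support := by
            rw [Walk.mem_support_iff_exists_getVert]
            refine ⟨1, rfl, ?_⟩
            rw [Walk.not_nil_iff_lt_length] at hnr
            omega
          exact (P.support_dropUntil_subset hv) this
        · apply hxP
          rw [hxw]
          exact P.start_mem_support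
      · apply hxP
        have : x ∈ r'.support := Walk.snd_mem_support_of_mem_edges r' habs
        have : x ∈ r.support := by
          rw [← hconsr, Walk.support_cons]
          exact List.mem_cons_of_mem _ this
        exact (P.support_dropUntil_subset hv) this
  · rw [Walk.length_cons, Walk.length_cons, Walk.length_append, Walk.length_reverse,
      Walk.length_cons]
    have hqr : q.length + r.length = P.length := by omega
    omega
  · rw [Walk.support_cons, Walk.support_cons, Walk.support_append, Walk.support_reverse,
      Walk.support_cons, List.tail_cons, hPsup]
    have hp1 : (u :: x :: (q.support.reverse ++ r'.support)).Perm
        (u :: x :: (q.support ++ r'.support)) :=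
      List.Perm.cons _ (List.Perm.cons _ ((q.support.reverse_perm).append_right _))
    exact hp1.trans (List.Perm.swap _ _ _)

lemma step_lemma {n k i : ℕ} (G : SimpleGraph (Fin n)) [DecidableRel G.Adj]
    (hind : IndepLE G k) (h1 : 1 ≤ i) (h2 : i ≤ 12 * k)
    {a : Fin n} (c : G.Walk a a) (hc : c.IsCycle) (hlen : c.length = n - i)
    (hdeg : ∀ x : Fin n, x ∉ c.support → 13 * k ≤ G.degree x) :
    ∃ (b : Fin n) (c' : G.Walk b b), c'.IsCycle ∧ c'.length = n - i + 1 ∧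
      ∃ x : Fin n, x ∉ c.support ∧
        ∀ y : Fin n, y ∈ c'.support ↔ y = x ∨ y ∈ c.support := by
  classical
  have hnil : ¬ c.Nil := hc.not_nil
  have h3 := hc.three_le_length
  have hin : i + 3 ≤ n := by omega
  -- cardinality of the support
  set F : Finset (Fin n) := c.support.toFinset with hF
  have hmemF : ∀ y, y ∈ F ↔ y ∈ c.support := fun y => List.mem_toFinset
  have hcardF : F.card = n - i := by
    have htail : c.support.tail.Nodup := hc.2
    have hFeq : F = c.support.tail.toFinset := by
      ext y
      rw [hmemF, List.mem_toFinset, mem_support_closed_iff c hnil]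
    have htl : c.support.tail.length = c.length := by
      rw [List.length_tail, c.length_support]
      omega
    rw [hFeq, List.toFinset_card_of_nodup htail, htl, hlen]
  -- an off-cycle vertex
  obtain ⟨x, hxF⟩ : ∃ x, x ∉ F := by
    by_contra hcon
    push_neg at hcon
    have := congrArg Finset.card (Finset.eq_univ_iff_forall.mpr hcon)
    rw [hcardF, Finset.card_univ, Fintype.card_fin] at this
    omega
  have hxsupp : x ∉ c.support := fun hh => hxF ((hmemF x).mpr hh)
  have hdegx : 13 * k ≤ G.degree x := hdeg x hxsupp
  -- neighbors on the cycle
  set N := G.neighborFinset x ∩ F with hN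
  have hNcard : k + 1 ≤ N.card := by
    have hsplit : N.card + (G.neighborFinset x \ F).card = (G.neighborFinset x).card :=
      Finset.card_inter_add_card_sdiff _ _
    have hsub : G.neighborFinset x \ F ⊆ (Finset.univ \ F).erase x := by
      intro y hy
      rcases Finset.mem_sdiff.mp hy with ⟨hy1, hy2⟩
      refine Finset.mem_erase.mpr ⟨?_, Finset.mem_sdiff.mpr ⟨Finset.mem_univ _, hy2⟩⟩
      intro hyx
      rw [hyx] at hy1
      exact G.irrefl ((G.mem_neighborFinset x x).mp hy1)
    have hcompl : (Finset.univ \ F).card = i := by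
      rw [Finset.card_sdiff_of_subset (Finset.subset_univ _), Finset.card_univ, Fintype.card_fin, hcardF]
      omega
    have hxmem : x ∈ Finset.univ \ F := Finset.mem_sdiff.mpr ⟨Finset.mem_univ _, hxF⟩
    have herase : ((Finset.univ \ F).erase x).card = i - 1 := by
      rw [Finset.card_erase_of_mem hxmem, hcompl]
    have hle := Finset.card_le_card hsub
    have hdegeq := G.card_neighborFinset_eq_degree x
    omega
  -- the successor function
  set f : Fin n → Fin n := fun y =>
    if h : ∃ d ∈ c.darts, d.fst = y then h.choose.snd else y with hfdef
  have hfd : ∀ y ∈ c.support, ∃ d ∈ c.darts, d.fst = y ∧ d.snd = f y := by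
    intro y hy
    have h := exists_dart_fst c hnil hy
    refine ⟨h.choose, h.choose_spec.1, h.choose_spec.2, ?_⟩
    rw [hfdef]
    simp only
    rw [dif_pos h]
  have huniq : ∀ d ∈ c.darts, f d.fst = d.snd := by
    intro d hd
    obtain ⟨d', hd', hfst, hsnd⟩ := hfd d.fst (Walk.dart_fst_mem_support_of_mem_darts c hd)
    rw [← hsnd]
    exact congrArg (fun d : G.Dart => d.snd) (dart_eq_of_fst_eq hc hd' hd hfst)
  have hfmem : ∀ y ∈ N, f y ∈ F := by
    intro y hy
    obtain ⟨d, hd, _, hsnd⟩ := hfd y ((hmemF y).mp (Finset.mem_inter.mp hy).2)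
    rw [hmemF, ← hsnd]
    exact Walk.dart_snd_mem_support_of_mem_darts c hd
  have hinj : ∀ y₁ ∈ N, ∀ y₂ ∈ N, f y₁ = f y₂ → y₁ = y₂ := by
    intro y₁ hy₁ y₂ hy₂ hf
    obtain ⟨d₁, hd₁, hfst₁, hsnd₁⟩ := hfd y₁ ((hmemF y₁).mp (Finset.mem_inter.mp hy₁).2)
    obtain ⟨d₂, hd₂, hfst₂, hsnd₂⟩ := hfd y₂ ((hmemF y₂).mp (Finset.mem_inter.mp hy₂).2)
    have : d₁ = d₂ := dart_eq_of_snd_eq hc hd₁ hd₂ (by rw [hsnd₁, hsnd₂, hf])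
    rw [← hfst₁, ← hfst₂, this]
  -- the independent-set contradiction
  set S := insert x (N.image f) with hS
  have hxnotim : x ∉ N.image f := by
    intro hh
    obtain ⟨y, hy, hfy⟩ := Finset.mem_image.mp hh
    exact hxF (hfy ▸ hfmem y hy)
  have hScard : k + 2 ≤ S.card := by
    rw [hS, Finset.card_insert_of_notMem hxnotim,
      Finset.card_image_of_injOn (fun y₁ h₁ y₂ h₂ => hinj y₁ h₁ y₂ h₂)]
    omega
  have hpair : ∃ p ∈ S, ∃ q ∈ S, p ≠ q ∧ G.Adj p q := by
    by_contra hcon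
    push_neg at hcon
    have := hind S (fun u hu v hv huv => hcon u hu v hv huv)
    omega
  obtain ⟨p, hp, q, hq, hpq, hadj⟩ := hpair
  -- facts about members of N
  have hNsupp : ∀ y ∈ N, y ∈ c.support := fun y hy => (hmemF y).mp (Finset.mem_inter.mp hy).2
  have hNadj : ∀ y ∈ N, G.Adj x y := fun y hy => by
    have := (Finset.mem_inter.mp hy).1
    rwa [G.mem_neighborFinset] at this
  -- Case A : insertion
  have caseA : ∀ y ∈ N, G.Adj x (f y) →
      ∃ (b : Fin n) (c' : G.Walk b b), c'.IsCycle ∧ c'.length = n - i + 1 ∧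
        ∃ x' : Fin n, x' ∉ c.support ∧
          ∀ y' : Fin n, y' ∈ c'.support ↔ y' = x' ∨ y' ∈ c.support := by
    intro y hyN hadjxf
    have hysupp := hNsupp y hyN
    have hxy := hNadj y hyN
    set e := c.rotate y hysupp with hedef
    have hecyc : e.IsCycle := hc.rotate hysupp
    have hene : ¬ e.Nil := hecyc.not_nil
    have hxe : x ∉ e.support := fun hh => hxsupp ((mem_support_rotate c hysupp hnil).mp hh)
    have hgv : e.getVert 1 = f y := by
      have hd := myFirstDart_mem e hene
      have hdc : (⟨(y, e.getVert 1), e.adj_snd hene⟩ : G.Dart) ∈ c.darts :=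
        (c.rotate_darts y hysupp).perm.mem_iff.mp hd
      exact (huniq _ hdc).symm
    obtain ⟨c', hcyc', hlen', hperm⟩ :=
      insert_cycle e hecyc hxe hxy.symm (by rw [hgv]; exact hadjxf)
    refine ⟨y, c', hcyc', ?_, x, hxsupp, ?_⟩
    · rw [hlen', _root_.length_rotate, hlen]
    · intro y'
      rw [hperm.mem_iff, List.mem_cons, mem_support_rotate c hysupp hnil]
  -- Case B : crossing
  have caseB : ∀ y₁ ∈ N, ∀ y₂ ∈ N, y₁ ≠ y₂ → G.Adj (f y₁) (f y₂) →
      ∃ (b : Fin n) (c' : G.Walk b b), c'.IsCycle ∧ c'.length = n - i + 1 ∧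
        ∃ x' : Fin n, x' ∉ c.support ∧
          ∀ y' : Fin n, y' ∈ c'.support ↔ y' = x' ∨ y' ∈ c.support := by
    intro y₁ hy₁N y₂ hy₂N hne12 hadj12
    have hy₁supp := hNsupp y₁ hy₁N
    have hy₂supp := hNsupp y₂ hy₂N
    have hxy₁ := hNadj y₁ hy₁N
    have hxy₂ := hNadj y₂ hy₂N
    set e := c.rotate y₁ hy₁supp with hedef
    have hecyc : e.IsCycle := hc.rotate hy₁supp
    have hene : ¬ e.Nil := hecyc.not_nil
    have hxe : x ∉ e.support := fun hh => hxsupp ((mem_support_rotate c hy₁supp hnil).mp hh)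
    have hconse : Walk.cons (e.adj_snd hene) e.tail = e := e.cons_tail_eq hene
    set P := e.tail with hPdef
    have hesup : e.support = y₁ :: P.support := by
      rw [e.support_eq_cons, Walk.support_tail_of_not_nil e hene]
    have hecyc2 := hecyc
    rw [← hconse, Walk.cons_isCycle_iff] at hecyc2
    obtain ⟨hPpath, hPedge⟩ := hecyc2
    have hw : e.getVert 1 = f y₁ := by
      have hd := myFirstDart_mem e hene
      have hdc : (⟨(y₁, e.getVert 1), e.adj_snd hene⟩ : G.Dart) ∈ c.darts :=
        (c.rotate_darts y₁ hy₁supp).perm.mem_iff.mp hd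
      exact (huniq _ hdc).symm
    have hy₂e : y₂ ∈ e.support := (mem_support_rotate c hy₁supp hnil).mpr hy₂supp
    have hy₂P : y₂ ∈ P.support := by
      rw [hesup] at hy₂e
      rcases List.mem_cons.mp hy₂e with hh | hh
      · exact absurd hh.symm hne12
      · exact hh
    have hy₂u : y₂ ≠ y₁ := fun hh => hne12 hh.symm
    have hxuP : x ∉ y₁ :: P.support := by rw [← hesup]; exact hxe
    have hzeq : (P.dropUntil y₂ hy₂P).getVert 1 = f y₂ := by
      have hnr : ¬ (P.dropUntil y₂ hy₂P).Nil := Walk.not_nil_of_ne hy₂u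
      have hd := myFirstDart_mem (P.dropUntil y₂ hy₂P) hnr
      have hd2 := P.darts_dropUntil_subset hy₂P hd
      have hdarts_eq : (Walk.cons (e.adj_snd hene) P).darts = e.darts :=
        congrArg Walk.darts hconse
      have hd3 : (⟨(y₂, (P.dropUntil y₂ hy₂P).getVert 1), (P.dropUntil y₂ hy₂P).adj_snd hnr⟩ : G.Dart) ∈ e.darts := by
        rw [← hdarts_eq, Walk.darts_cons]
        exact List.mem_cons_of_mem _ hd2
      have hdc := (c.rotate_darts y₁ hy₁supp).perm.mem_iff.mp hd3
      exact (huniq _ hdc).symm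
    have hcross : G.Adj (e.getVert 1) ((P.dropUntil y₂ hy₂P).getVert 1) := by
      have h' := hadj12
      rw [← hzeq] at h'
      rw [← hw] at h'
      exact h'
    obtain ⟨c', hcyc', hlen', hperm⟩ :=
      cross_cycle (e.adj_snd hene) P hPpath hy₂P hy₂u hxuP hxy₁.symm hxy₂ hcross
    refine ⟨y₁, c', hcyc', ?_, x, hxsupp, ?_⟩
    · have hPl : P.length + 1 = e.length := Walk.length_tail_add_one hene
      have hel : e.length = c.length := length_rotate c hy₁supp
      omega
    · intro y'
      rw [hperm.mem_iff, List.mem_cons, ← hesup, hedef,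
        mem_support_rotate c hy₁supp hnil]
  -- case analysis on the adjacent pair
  rcases Finset.mem_insert.mp hp with rfl | hp'
  · rcases Finset.mem_insert.mp hq with rfl | hq'
    · exact absurd rfl hpq
    · obtain ⟨y, hyN, rfl⟩ := Finset.mem_image.mp hq'
      exact caseA y hyN hadj
  · obtain ⟨y₁, hy₁N, rfl⟩ := Finset.mem_image.mp hp'
    rcases Finset.mem_insert.mp hq with rfl | hq'
    · exact caseA y₁ hy₁N hadj.symm
    · obtain ⟨y₂, hy₂N, rfl⟩ := Finset.mem_image.mp hq'
      exact caseB y₁ hy₁N y₂ hy₂N (fun hh => hpq (by rw [hh])) hadj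

lemma aux_induction {n : ℕ} (G : SimpleGraph (Fin n)) [DecidableRel G.Adj]
    (k : ℕ) (hind : IndepLE G k) :
    ∀ i : ℕ, 1 ≤ i → i ≤ 12 * k → ∀ (a : Fin n) (c : G.Walk a a), c.IsCycle →
      c.length = n - i → (∀ x : Fin n, x ∉ c.support → 13 * k ≤ G.degree x) →
      ∃ (b : Fin n) (c' : G.Walk b b), c'.IsCycle ∧ c'.length = n - 1 ∧
        ∀ w : Fin n, w ∈ c.support → w ∈ c'.support := by
  intro i
  induction i using Nat.strong_induction_on with
  | _ i ih =>
    intro h1 h2 a c hcyc hlen hdeg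
    rcases eq_or_lt_of_le h1 with heq | hgt
    · exact ⟨a, c, hcyc, by rw [hlen, ← heq], fun w hw => hw⟩
    · obtain ⟨b, c', hcyc', hlen', x, hxsupp, hsupp'⟩ :=
        step_lemma G hind h1 h2 c hcyc hlen hdeg
      have hi3 : i + 3 ≤ n := by
        have := hcyc.three_le_length
        omega
      obtain ⟨b', c'', hcyc'', hlen'', hsupp''⟩ :=
        ih (i - 1) (by omega) (by omega) (by omega) b c' hcyc'
          (by rw [hlen']; omega)
          (fun y hy => hdeg y (fun hh => hy ((hsupp' y).mpr (Or.inr hh))))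
      exact ⟨b', c'', hcyc'', hlen'',
        fun w hw => hsupp'' w ((hsupp' w).mpr (Or.inr hw))⟩


end Helpers

/-- If `G` is a graph on `n` vertices with `α(G) ≤ k` which contains, for some
`1 ≤ i ≤ 12k`, a cycle of length `n - i` through all of `W` such that every vertex
off the cycle has degree at least `13k`, then `G` contains a cycle of length `n - 1`
through all of `W`. -/
theorem cycle_extension {n : ℕ} (G : SimpleGraph (Fin n)) [DecidableRel G.Adj]
    (k : ℕ) (hind : IndepLE G k) (W : Finset (Fin n))
    (h : ∃ i : ℕ, 1 ≤ i ∧ i ≤ 12 * k ∧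
      ∃ (v : Fin n) (cyc : G.Walk v v), cyc.IsCycle ∧ cyc.length = n - i ∧
        (∀ w ∈ W, w ∈ cyc.support) ∧
        (∀ x : Fin n, x ∉ cyc.support → 13 * k ≤ G.degree x)) :
    ∃ (v : Fin n) (cyc : G.Walk v v), cyc.IsCycle ∧ cyc.length = n - 1 ∧
      ∀ w ∈ W, w ∈ cyc.support := by
  obtain ⟨i, h1, h2, v, cyc, hcyc, hlen, hW, hdeg⟩ := h
  obtain ⟨b, c', hcyc', hlen', hsupp⟩ :=
    aux_induction G k hind i h1 h2 v cyc hcyc hlen hdeg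
  exact ⟨b, c', hcyc', hlen', fun w hw => hsupp w (hW w hw)⟩
end

section
/- Let G be a graph with independence number α(G) ≤ k, let C be a cycle in G, and let x be a vertex of G not on C that has at least k neighbors among the vertices of C. Then G contains a cycle of length |C| + 1 whose vertex set is exactly the vertex set of C together with x. -/
namespace CycleAbsorb

variable {V : Type*}

open SimpleGraph

/-- Build a walk from a chain of adjacencies. -/
def mkWalk (G : SimpleGraph V) : (a : V) → (l : List V) → (b : V) →
    List.Chain G.Adj a (l ++ [b]) → G.Walk a b
  | _, [], _, h => Walk.cons (List.chain_cons.mp h).1 Walk.nil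
  | _, c :: l, b, h =>
    Walk.cons (List.chain_cons.mp h).1 (mkWalk G c l b (List.chain_cons.mp h).2)

lemma mkWalk_support (G : SimpleGraph V) : ∀ (a : V) (l : List V) (b : V)
    (h : List.Chain G.Adj a (l ++ [b])), (mkWalk G a l b h).support = a :: (l ++ [b])
  | _, [], _, _ => rfl
  | a, c :: l, b, h => by
    simp [mkWalk, mkWalk_support G c l b (List.chain_cons.mp h).2]

lemma mkWalk_length (G : SimpleGraph V) : ∀ (a : V) (l : List V) (b : V)
    (h : List.Chain G.Adj a (l ++ [b])), (mkWalk G a l b h).length = l.length + 1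
  | _, [], _, _ => rfl
  | a, c :: l, b, h => by
    simp [mkWalk, mkWalk_length G c l b (List.chain_cons.mp h).2]

lemma not_edge_ends (G : SimpleGraph V) {a b : V} (p : G.Walk a b)
    (hnd : p.support.Nodup) (hlen : 2 ≤ p.length) : s(b, a) ∉ p.edges := by
  cases p with
  | nil => simp
  | @cons _ c _ h q =>
    intro hmem
    rw [Walk.edges_cons, List.mem_cons] at hmem
    rcases hmem with hmem | hmem
    · have hbc : b = c := by
        rcases Sym2.eq_iff.mp hmem with ⟨h1, h2⟩ | ⟨h1, _⟩
        · exact h1.trans h2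
        · exact h1
      subst hbc
      cases q with
      | nil => simp at hlen
      | cons h' q' =>
        have hb : b ∈ q'.support := q'.end_mem_support
        simp only [Walk.support_cons, List.nodup_cons, List.mem_cons] at hnd
        exact hnd.2.1 hb
    · have : a ∈ q.support := Walk.snd_mem_support_of_mem_edges q hmem
      rw [Walk.support_cons, List.nodup_cons] at hnd
      exact hnd.1 this

lemma cycle_of_list [DecidableEq V] (G : SimpleGraph V) (x : V) (l : List V)
    (hnd : (x :: l).Nodup) (hchain : List.Chain G.Adj x (l ++ [x])) (hlen : 2 ≤ l.length) :
    ∃ c' : G.Walk x x, c'.IsCycle ∧ c'.length = l.length + 1 ∧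
      c'.support.toFinset = insert x l.toFinset := by
  match l, hnd, hchain, hlen with
  | a :: l', hnd, hchain, hlen =>
    have h1 : G.Adj x a := (List.chain_cons.mp hchain).1
    have h2 : List.Chain G.Adj a (l' ++ [x]) := (List.chain_cons.mp hchain).2
    obtain ⟨hx1, hnd2⟩ := List.nodup_cons.mp hnd
    obtain ⟨ha1, hnd3⟩ := List.nodup_cons.mp hnd2
    have hxa : x ≠ a := fun h => hx1 (by simp [h])
    have hxl' : x ∉ l' := fun h => hx1 (by simp [h])
    set p := mkWalk G a l' x h2 with hp
    have hsup : p.support = a :: (l' ++ [x]) := mkWalk_support G a l' x h2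
    have hplen : p.length = l'.length + 1 := mkWalk_length G a l' x h2
    have hnd' : p.support.Nodup := by
      rw [hsup]
      refine List.nodup_cons.mpr ⟨?_, ?_⟩
      · simp only [List.mem_append, List.mem_singleton]
        rintro (h | h)
        · exact ha1 h
        · exact hxa h.symm
      · exact List.Nodup.append hnd3 (List.nodup_singleton x)
          (fun b hb hbx => hxl' (by simp only [List.mem_singleton] at hbx; exact hbx ▸ hb))
    have hpath : p.IsPath := Walk.IsPath.mk' hnd'
    have hedge : s(x, a) ∉ p.edges := not_edge_ends G p hnd' (by rw [hplen]; simp only [List.length_cons] at hlen; omega)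
    refine ⟨Walk.cons h1 p, (Walk.cons_isCycle_iff p h1).mpr ⟨hpath, hedge⟩, ?_, ?_⟩
    · simp [hplen]
    · ext w
      simp only [Walk.support_cons, hsup, List.toFinset_cons, List.toFinset_append,
        Finset.mem_insert, List.mem_toFinset, List.mem_cons, List.mem_append,
        List.mem_singleton, Finset.mem_union, List.toFinset_nil, Finset.notMem_empty, Finset.mem_insert,
        Finset.mem_singleton]
      tauto

lemma chain_helper {R : V → V → Prop} {f : ℕ → V} {x : V} :
    ∀ (E : List ℕ) (hne : E ≠ []) (y : V), R y (f (E.head hne)) →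
      List.Chain' (fun p q : ℕ => R (f p) (f q)) E →
      R (f (E.getLast hne)) x →
      List.Chain R y (E.map f ++ [x])
  | [], hne, _, _, _, _ => absurd rfl hne
  | [e], _, y, h1, _, h3 =>
    List.chain_cons.mpr ⟨h1, List.chain_cons.mpr ⟨h3, List.Chain.nil⟩⟩
  | e :: e' :: E, _, y, h1, h2, h3 => by
    rw [List.map_cons, List.cons_append]
    apply List.chain_cons.mpr
    refine ⟨h1, chain_helper (e' :: E) (by simp) (f e) ?_ ?_ ?_⟩
    · exact (List.isChain_cons_cons.mp h2).1
    · exact (List.isChain_cons_cons.mp h2).2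
    · rwa [List.getLast_cons (by simp)] at h3

lemma chain'_asc {S : ℕ → ℕ → Prop} (hS : ∀ p, S p (p + 1)) :
    ∀ (m a : ℕ), List.Chain' S (List.range' a m)
  | 0, _ => by exact List.isChain_nil
  | 1, a => by exact List.isChain_singleton a
  | (m + 2), a => by
    rw [List.range'_succ, List.range'_succ]
    refine List.isChain_cons_cons.mpr ?_
    rw [← List.range'_succ]
    exact ⟨hS a, chain'_asc hS (m + 1) (a + 1)⟩

lemma finish_cycle [DecidableEq V] (G : SimpleGraph V) (x : V) (f : ℕ → V) (n a : ℕ)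
    (hn : 3 ≤ n)
    (hred : ∀ m, f m = f (m % n))
    (hinj : ∀ m1 m2, f m1 = f m2 → m1 % n = m2 % n)
    (hx : ∀ m, x ≠ f m)
    (E : List ℕ) (hElen : E.length = n)
    (hEmem : ∀ e ∈ E, a < e ∧ e ≤ a + n)
    (hEnd : E.Nodup)
    (hchain : List.Chain G.Adj x (E.map f ++ [x])) :
    ∃ c' : G.Walk x x, c'.IsCycle ∧ c'.length = n + 1 ∧
      c'.support.toFinset = insert x ((Finset.range n).image f) := by
  have hmapnd : (E.map f).Nodup := by
    refine List.Nodup.map_on ?_ hEnd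
    intro e1 he1 e2 he2 hfe
    have h := hinj _ _ hfe
    obtain ⟨hb1, hb2⟩ := hEmem e1 he1
    obtain ⟨hb3, hb4⟩ := hEmem e2 he2
    rcases Nat.le_total e1 e2 with hle | hle
    · have hdvd : n ∣ e2 - e1 := (Nat.modEq_iff_dvd' hle).mp h
      rcases Nat.eq_zero_or_pos (e2 - e1) with h0 | h0
      · omega
      · have := Nat.le_of_dvd h0 hdvd; omega
    · have hdvd : n ∣ e1 - e2 := (Nat.modEq_iff_dvd' hle).mp h.symm
      rcases Nat.eq_zero_or_pos (e1 - e2) with h0 | h0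
      · omega
      · have := Nat.le_of_dvd h0 hdvd; omega
  have hndx : (x :: E.map f).Nodup := by
    refine List.nodup_cons.mpr ⟨?_, hmapnd⟩
    simp only [List.mem_map]
    rintro ⟨e, _, he⟩
    exact hx e he.symm
  obtain ⟨c', hcyc, hlen, hfin⟩ := cycle_of_list G x (E.map f) hndx hchain
    (by rw [List.length_map, hElen]; omega)
  refine ⟨c', hcyc, by rw [hlen]; simp [hElen], ?_⟩
  rw [hfin]
  congr 1
  apply Finset.eq_of_subset_of_card_le
  · intro w hw
    simp only [List.mem_toFinset, List.mem_map] at hw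
    obtain ⟨e, he, rfl⟩ := hw
    refine Finset.mem_image.mpr ⟨e % n, Finset.mem_range.mpr (Nat.mod_lt _ (by omega)), ?_⟩
    exact (hred e).symm
  · have h1 : (E.map f).toFinset.card = n := by
      rw [List.toFinset_card_of_nodup hmapnd, List.length_map, hElen]
    rw [h1]
    exact Finset.card_image_le.trans (by simp)

end CycleAbsorb
open SimpleGraph CycleAbsorb in
/-- If `α(G) ≤ k`, `C` is a cycle of `G`, and `x` is a vertex not on `C` with at
least `k` neighbors on `C`, then `G` has a cycle of length `|C| + 1` whose vertex
set is exactly the vertex set of `C` together with `x`.  (For a cycle walk `c`,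
the number of vertices of the cycle equals `c.length`.) -/
theorem cycle_absorb_vertex {V : Type*} [DecidableEq V]
    (G : SimpleGraph V) [DecidableRel G.Adj] (k : ℕ) (hind : IndepLE G k)
    {v : V} (c : G.Walk v v) (hc : c.IsCycle)
    (x : V) (hx : x ∉ c.support)
    (hnbrs : k ≤ (c.support.toFinset.filter (fun w => G.Adj x w)).card) :
    ∃ (u : V) (c' : G.Walk u u), c'.IsCycle ∧ c'.length = c.length + 1 ∧
      c'.support.toFinset = insert x c.support.toFinset := by
  classical
  obtain ⟨n, hn⟩ : ∃ n, n = c.length := ⟨c.length, rfl⟩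
  have hn3 : 3 ≤ n := hn ▸ hc.three_le_length
  have hn0 : 0 < n := by omega
  obtain ⟨t, ht⟩ : ∃ t, t = c.support.tail := ⟨_, rfl⟩
  have hsupp : c.support = v :: t := by rw [ht]; exact c.support_eq_cons
  have htlen : t.length = n := by
    have h := c.length_support
    rw [hsupp, List.length_cons] at h
    omega
  have htne : t ≠ [] := by intro h; rw [h] at htlen; simp at htlen; omega
  have htnd : t.Nodup := by rw [ht]; exact hc.support_nodup
  have hgetlt : ∀ m : ℕ, m % n < t.length := fun m => by
    rw [htlen]; exact Nat.mod_lt m hn0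
  have hgc' : ∀ (i j : ℕ) (hi : i < t.length) (hj : j < t.length),
      i = j → t[i]'hi = t[j]'hj := fun i j hi hj h => by subst h; rfl
  have hlast? : t.getLast? = some v := by
    have h2 : c.support.getLast? = some v := by
      rw [List.getLast?_eq_getLast c.support_ne_nil]
      exact congrArg some c.getLast_support
    rw [hsupp] at h2
    obtain ⟨hd, tl, htt⟩ := List.exists_cons_of_ne_nil htne
    rw [htt] at h2 ⊢
    rwa [List.getLast?_cons_cons] at h2
  have ht0' : t[n-1]'(by omega) = v := by
    have h3 := List.getLast?_eq_getElem? (l := t)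
    rw [hlast?, List.getElem?_eq_getElem (by omega : t.length - 1 < t.length)] at h3
    have h4 : v = t[t.length - 1]'(by omega) := Option.some_injective _ h3
    exact (hgc' (n-1) (t.length - 1) (by omega) (by omega) (by omega)).trans h4.symm
  have hvt : v ∈ t := ht0' ▸ List.getElem_mem _
  have hxt : x ∉ t := fun h => hx (by rw [hsupp]; exact List.mem_cons_of_mem _ h)
  have hfinset : c.support.toFinset = t.toFinset := by
    rw [hsupp, List.toFinset_cons, Finset.insert_eq_self.mpr (List.mem_toFinset.mpr hvt)]
  obtain ⟨f, hfdef⟩ : ∃ f : ℕ → V, f = fun m => t[m % n]'(hgetlt m) := ⟨_, rfl⟩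
  have hfeq : ∀ i j, i % n = j % n → f i = f j := by
    intro i j h
    simp only [hfdef]
    exact hgc' _ _ _ _ h
  have hred : ∀ m, f m = f (m % n) :=
    fun m => hfeq _ _ (Nat.mod_eq_of_lt (Nat.mod_lt m hn0)).symm
  have hper : ∀ m, f (m + n) = f m := fun m => hfeq _ _ (Nat.add_mod_right m n)
  have hval : ∀ i, ∀ h : i < n, f i = t[i]'(by omega) := by
    intro i h
    simp only [hfdef]
    exact hgc' _ _ _ _ (Nat.mod_eq_of_lt h)
  have hinj : ∀ m1 m2, f m1 = f m2 → m1 % n = m2 % n := by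
    intro m1 m2 h
    simp only [hfdef] at h
    exact htnd.getElem_inj_iff.mp h
  have hfmem : ∀ m, f m ∈ t := by
    intro m; simp only [hfdef]; exact List.getElem_mem _
  have hxf : ∀ m, x ≠ f m := fun m h => hxt (h ▸ hfmem m)
  have hsurj : ∀ w ∈ t, ∃ m, m < n ∧ f m = w := by
    intro w hw
    obtain ⟨i, hi, hieq⟩ := List.mem_iff_getElem.mp hw
    refine ⟨i, by omega, ?_⟩
    rw [hval i (by omega)]
    exact hieq
  -- adjacency along the cycle
  have hchainS : List.Chain' G.Adj (v :: t) := by rw [← hsupp]; exact c.isChain_adj_support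
  have hct : List.Chain' G.Adj t := (List.isChain_cons.mp hchainS).2
  have hh : G.Adj v (t[0]'(by omega)) := by
    have h := (List.isChain_cons.mp hchainS).1
    apply h
    rw [List.head?_eq_head htne, List.head_eq_getElem]
    rfl
  have hadj_t : ∀ i, ∀ _ : i + 1 < n, G.Adj (t[i]'(by omega)) (t[i+1]'(by omega)) := by
    intro i hi1
    have h := List.isChain_iff_getElem.mp hct i (by omega)
    simpa using h
  have ht0 : t[n-1]'(by omega) = v := ht0'
  have hadj : ∀ m, G.Adj (f m) (f (m + 1)) := by
    intro m
    by_cases hcase : m % n + 1 < n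
    · have e1 : f m = t[m % n]'(hgetlt m) := by simp only [hfdef]
      have e2 : f (m + 1) = t[m % n + 1]'(by omega) := by
        rw [hfeq (m + 1) (m % n + 1) ((Nat.mod_modEq m n).add_right 1).symm]
        exact hval (m % n + 1) hcase
      rw [e1, e2]
      exact hadj_t (m % n) hcase
    · have hieq : m % n = n - 1 := by have := Nat.mod_lt m hn0; omega
      have e1 : f m = v := by
        simp only [hfdef]
        rw [← ht0]
        exact hgc' _ _ _ _ hieq
      have e2 : f (m + 1) = t[0]'(by omega) := by
        have hmod : (m + 1) % n = 0 % n := by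
          have h2 : (m + 1) % n = (m % n + 1) % n := ((Nat.mod_modEq m n).add_right 1).symm
          have h3 : m % n + 1 = n := by omega
          rw [h2, h3, Nat.mod_self, Nat.zero_mod]
        rw [hfeq (m + 1) 0 hmod]
        exact hval 0 (by omega)
      rw [e1, e2]
      exact hh
  -- neighbor count transferred to indices
  have hN : k ≤ ((Finset.range n).filter (fun m => G.Adj x (f m))).card := by
    have hsub : c.support.toFinset.filter (fun w => G.Adj x w) ⊆
        ((Finset.range n).filter (fun m => G.Adj x (f m))).image f := by
      intro w hw
      obtain ⟨hw1, hw2⟩ := Finset.mem_filter.mp hw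
      rw [hfinset, List.mem_toFinset] at hw1
      obtain ⟨m, hm, rfl⟩ := hsurj w hw1
      exact Finset.mem_image.mpr ⟨m, Finset.mem_filter.mpr ⟨Finset.mem_range.mpr hm, hw2⟩, rfl⟩
    calc k ≤ _ := hnbrs
      _ ≤ _ := Finset.card_le_card hsub
      _ ≤ _ := Finset.card_image_le
  have himage : (Finset.range n).image f = c.support.toFinset := by
    rw [hfinset]
    ext w
    simp only [Finset.mem_image, Finset.mem_range, List.mem_toFinset]
    constructor
    · rintro ⟨m, _, rfl⟩; exact hfmem m
    · intro hw; exact hsurj w hw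
  by_cases hA : ∃ m, m < n ∧ G.Adj x (f m) ∧ G.Adj x (f (m + 1))
  · -- two consecutive neighbors: insert x between them
    obtain ⟨m, hm, hxm, hxm1⟩ := hA
    have hne : List.range' (m+1) n ≠ [] := by simp; omega
    have hEchain : List.Chain G.Adj x ((List.range' (m+1) n).map f ++ [x]) := by
      refine chain_helper _ hne x ?_ ?_ ?_
      · rw [List.head_eq_getElem, List.getElem_range']
        simpa using hxm1
      · exact chain'_asc hadj n (m+1)
      · rw [List.getLast_range']
        have h5 : m + 1 + n - 1 = m + n := by omega
        rw [h5, hper]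
        exact hxm.symm
    obtain ⟨c', h1, h2, h3⟩ := finish_cycle G x f n m hn3 hred hinj hxf
      (List.range' (m+1) n) (by simp)
      (by intro e he; rw [List.mem_range'_1] at he; omega)
      List.nodup_range' hEchain
    exact ⟨x, c', h1, by rw [h2, hn], by rw [h3, himage]⟩
  · -- no two consecutive neighbors: independent-set argument
    push_neg at hA
    have hB : ∀ m, G.Adj x (f m) → ¬ G.Adj x (f (m + 1)) := by
      intro m h1 h2
      refine hA (m % n) (Nat.mod_lt m hn0) ?_ ?_
      · rw [← hred]; exact h1
      · have h3 : f (m % n + 1) = f (m + 1) := hfeq _ _ ((Nat.mod_modEq m n).add_right 1)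
        rw [h3]; exact h2
    have hhead? : ∀ s m : ℕ, 1 ≤ m → (List.range' s m).head? = some s := by
      intro s m hm
      obtain ⟨m', rfl⟩ := Nat.exists_eq_add_of_le hm
      rw [Nat.add_comm, List.range'_succ, List.head?_cons]
    -- the surgery for a crossing edge between successors of two neighbors
    have key : ∀ a b : ℕ, a < n → b < n → G.Adj x (f a) → G.Adj x (f b) → a < b →
        G.Adj (f (a+1)) (f (b+1)) →
        ∃ (u : V) (c' : G.Walk u u), c'.IsCycle ∧ c'.length = c.length + 1 ∧
          c'.support.toFinset = insert x c.support.toFinset := by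
      intro a b han hbn hxa hxb hab hcross
      obtain ⟨d, hd⟩ : ∃ d, d = b - a := ⟨_, rfl⟩
      have hd1 : 1 ≤ d := by omega
      have hdn : d ≤ n - 1 := by omega
      have hbad : b = a + d := by omega
      have hseg1ne : (List.range' (a+1) d).reverse ≠ [] := by simp; omega
      have hseg2ne : List.range' (b+1) (n-d) ≠ [] := by simp; omega
      obtain ⟨E, hE⟩ : ∃ E, E = (List.range' (a+1) d).reverse ++ List.range' (b+1) (n-d) :=
        ⟨_, rfl⟩
      have hElen : E.length = n := by rw [hE]; simp; omega
      have hEne : E ≠ [] := by intro h; rw [h] at hElen; simp at hElen; omega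
      have hEhead : E.head hEne = b := by
        have h6 : E.head hEne = ((List.range' (a+1) d).reverse ++
            List.range' (b+1) (n-d)).head (hE ▸ hEne) := by
          congr 1
        rw [h6, List.head_append, dif_neg (by simpa using hseg1ne),
          List.head_reverse, List.getLast_range']
        omega
      have hEglast : E.getLast hEne = a + n := by
        have h6 : E.getLast hEne = ((List.range' (a+1) d).reverse ++
            List.range' (b+1) (n-d)).getLast (hE ▸ hEne) := by
          congr 1
        rw [h6, List.getLast_append, dif_neg (by simpa using hseg2ne),
          List.getLast_range']
        omega
      have hEchain : List.Chain G.Adj x (E.map f ++ [x]) := by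
        refine chain_helper E hEne x ?_ ?_ ?_
        · rw [hEhead]; exact hxb
        · rw [hE]
          refine List.isChain_append.mpr ⟨?_, ?_, ?_⟩
          · rw [List.isChain_reverse]
            exact chain'_asc (S := flip fun p q => G.Adj (f p) (f q))
              (fun p => (hadj p).symm) d (a+1)
          · exact chain'_asc hadj (n-d) (b+1)
          · intro p hp q hq
            rw [List.getLast?_reverse, hhead? _ _ (by omega), Option.mem_some_iff] at hp
            rw [hhead? _ _ (by omega), Option.mem_some_iff] at hq
            rw [← hp, ← hq]
            exact hcross
        · rw [hEglast, hper]; exact hxa.symm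
      have hEmem : ∀ e ∈ E, a < e ∧ e ≤ a + n := by
        intro e he
        rw [hE, List.mem_append, List.mem_reverse] at he
        rcases he with he | he <;> rw [List.mem_range'_1] at he <;> omega
      have hEnd : E.Nodup := by
        rw [hE]
        refine List.Nodup.append (List.nodup_reverse.mpr List.nodup_range')
          List.nodup_range' ?_
        intro e he1 he2
        rw [List.mem_reverse, List.mem_range'_1] at he1
        rw [List.mem_range'_1] at he2
        omega
      obtain ⟨c', h1, h2, h3⟩ := finish_cycle G x f n a hn3 hred hinj hxf E hElen hEmem
        hEnd hEchain
      exact ⟨x, c', h1, by rw [h2, hn], by rw [h3, himage]⟩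
    -- build the large set and find an edge in it
    obtain ⟨T, hT⟩ : ∃ T, T = insert x
        ((((Finset.range n).filter (fun m => G.Adj x (f m))).image (fun m => f (m+1)))) :=
      ⟨_, rfl⟩
    have himginj : Set.InjOn (fun m => f (m+1))
        ((Finset.range n).filter (fun m => G.Adj x (f m))) := by
      intro m1 h1 m2 h2 he
      simp only [Finset.coe_filter, Set.mem_setOf_eq, Finset.mem_range] at h1 h2
      have h3 := hinj _ _ he
      have h4 : m1 % n = m2 % n := Nat.ModEq.add_right_cancel' 1 h3
      rwa [Nat.mod_eq_of_lt h1.1, Nat.mod_eq_of_lt h2.1] at h4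
    have hxnot : x ∉ (((Finset.range n).filter (fun m => G.Adj x (f m))).image
        (fun m => f (m+1))) := by
      rw [Finset.mem_image]
      rintro ⟨m, _, hmx⟩
      exact hxf (m+1) hmx.symm
    have hTcard : k < T.card := by
      rw [hT, Finset.card_insert_of_notMem hxnot, Finset.card_image_of_injOn himginj]
      omega
    have hedge_ex : ∃ u ∈ T, ∃ w ∈ T, u ≠ w ∧ G.Adj u w := by
      by_contra hcon
      push_neg at hcon
      exact absurd (hind T (fun u hu w hw huw => hcon u hu w hw huw)) (by omega)
    obtain ⟨u, hu, w, hw, huw, hadjuw⟩ := hedge_ex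
    rw [hT, Finset.mem_insert] at hu hw
    rcases hu with rfl | hu
    · rcases hw with rfl | hw
      · exact absurd rfl huw
      · obtain ⟨m, hmI, rfl⟩ := Finset.mem_image.mp hw
        exact absurd hadjuw (hB m (Finset.mem_filter.mp hmI).2)
    · rcases hw with rfl | hw
      · obtain ⟨m, hmI, rfl⟩ := Finset.mem_image.mp hu
        exact absurd hadjuw.symm (hB m (Finset.mem_filter.mp hmI).2)
      · obtain ⟨i, hiI, rfl⟩ := Finset.mem_image.mp hu
        obtain ⟨j, hjI, rfl⟩ := Finset.mem_image.mp hw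
        obtain ⟨hin, hiadj⟩ := Finset.mem_filter.mp hiI
        obtain ⟨hjn, hjadj⟩ := Finset.mem_filter.mp hjI
        have hij : i ≠ j := fun h => huw (by rw [h])
        rcases lt_or_gt_of_ne hij with h | h
        · exact key i j (Finset.mem_range.mp hin) (Finset.mem_range.mp hjn) hiadj hjadj h
            hadjuw
        · exact key j i (Finset.mem_range.mp hjn) (Finset.mem_range.mp hin) hjadj hiadj h
            hadjuw.symm
end

section
/- For every integer k ≥ 5 there exists a Hamiltonian graph G on exactly k(k−2) vertices with independence number α(G) = k that contains no cycle of length k − 1 (and hence is not pancyclic). Such a graph is obtained by taking k disjoint cliques K_1, …, K_k, each of size k − 2 with two distinguished vertices v_i, w_i ∈ K_i, and adding the edges {v_i, w_{i+1}} for all i (indices modulo k). -/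
open SimpleGraph

section Helpers
variable {V : Type*} {G : SimpleGraph V}

private lemma countP_or_disjoint (l : List V) (p q : V → Bool)
    (h : ∀ a ∈ l, ¬(p a = true ∧ q a = true)) :
    l.countP (fun a => p a || q a) = l.countP p + l.countP q := by
  induction l with
  | nil => simp
  | cons a l ih =>
    simp only [List.countP_cons]
    rw [ih (fun b hb => h b (List.mem_cons_of_mem _ hb))]
    have := h a List.mem_cons_self
    by_cases hp : p a <;> by_cases hq : q a <;> simp [hp, hq] at * <;> omega

private lemma count_map_eq_countP {W : Type*} [DecidableEq W] (g : V → W) (l : List V) (b : W) :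
    (l.map g).count b = l.countP (fun a => decide (g a = b)) := by
  induction l with
  | nil => simp
  | cons a l ih => by_cases h : g a = b <;> simp [List.count_cons, ih, h]

private lemma crossings_parity (c : V → Bool) {u w : V} (p : G.Walk u w) :
    (p.darts.countP fun d => c d.fst != c d.snd) % 2 = if c u = c w then 0 else 1 := by
  induction p with
  | nil => simp
  | @cons u b w h q ih =>
    rw [Walk.darts_cons, List.countP_cons]
    cases hcu : c u <;> cases hcb : c b <;> cases hcw : c w <;> simp_all <;> omega

/-- walk along `f j, f (j+1), ..., f (j+c)` -/
private def walkSeg (f : ℕ → V) (hadj : ∀ j, G.Adj (f j) (f (j+1))) :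
    (c j : ℕ) → G.Walk (f j) (f (j + c))
  | 0, _ => Walk.nil
  | (c+1), j => Walk.cons (hadj j) ((walkSeg f hadj c (j+1)).copy rfl (congrArg f (by omega)))

private lemma walkSeg_support (f : ℕ → V) (hadj : ∀ j, G.Adj (f j) (f (j+1))) (c j : ℕ) :
    (walkSeg (G := G) f hadj c j).support = (List.range' j (c+1)).map f := by
  induction c generalizing j with
  | zero => simp [walkSeg, List.range']
  | succ c ih => simp [walkSeg, List.range', ih]

private lemma walkSeg_edges (f : ℕ → V) (hadj : ∀ j, G.Adj (f j) (f (j+1))) (c j : ℕ) :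
    (walkSeg (G := G) f hadj c j).edges = (List.range' j c).map (fun t => s(f t, f (t+1))) := by
  induction c generalizing j with
  | zero => simp [walkSeg]
  | succ c ih => simp [walkSeg, List.range', ih]

private lemma walkSeg_length (f : ℕ → V) (hadj : ∀ j, G.Adj (f j) (f (j+1))) (c j : ℕ) :
    (walkSeg (G := G) f hadj c j).length = c := by
  induction c generalizing j with
  | zero => simp [walkSeg]
  | succ c ih => simp [walkSeg, ih]

private lemma isHamiltonian_of_cyclic [Fintype V] [DecidableEq V] {n : ℕ} (hn : 3 ≤ n)
    (hcard : Fintype.card V = n) (f : ℕ → V)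
    (hf : ∀ a b, f a = f b ↔ a % n = b % n) (hsurj : Function.Surjective f)
    (hadj : ∀ j, G.Adj (f j) (f (j+1))) : G.IsHamiltonian := by
  intro _
  have hn0 : 0 < n := by omega
  have mod_inj : ∀ a b : ℕ, 1 ≤ a → a ≤ n → 1 ≤ b → b ≤ n → a % n = b % n → a = b := by
    intro a b ha1 ha2 hb1 hb2 h
    rcases eq_or_lt_of_le ha2 with rfl | ha
    · rw [Nat.mod_self] at h
      rcases eq_or_lt_of_le hb2 with rfl | hb
      · rfl
      · rw [Nat.mod_eq_of_lt hb] at h; omega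
    · rw [Nat.mod_eq_of_lt ha] at h
      rcases eq_or_lt_of_le hb2 with rfl | hb
      · rw [Nat.mod_self] at h; omega
      · rw [Nat.mod_eq_of_lt hb] at h; exact h
  have h0n : f (0 + n) = f 0 := (hf _ _).2 (by simp)
  refine ⟨f 0, (walkSeg f hadj n 0).copy rfl h0n, ?_⟩
  rw [Walk.isHamiltonianCycle_iff_isCycle_and_support_count_tail_eq_one]
  have htail : ((walkSeg (G := G) f hadj n 0).copy rfl h0n).support.tail
      = (List.range' 1 n).map f := by
    rw [Walk.support_copy, walkSeg_support]
    have : List.range' 0 (n+1) = 0 :: List.range' 1 n := rfl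
    rw [this, List.map_cons, List.tail_cons]
  have htailnd : ((walkSeg (G := G) f hadj n 0).copy rfl h0n).support.tail.Nodup := by
    rw [htail]
    refine List.Nodup.map_on ?_ List.nodup_range'
    intro a ha b hb hab
    rw [List.mem_range'_1] at ha hb
    exact mod_inj a b (by omega) (by omega) (by omega) (by omega) ((hf a b).1 hab)
  constructor
  · refine ⟨⟨⟨?_⟩, ?_⟩, htailnd⟩
    · rw [Walk.edges_copy, walkSeg_edges]
      refine List.Nodup.map_on ?_ List.nodup_range'
      intro a ha b hb hab
      rw [List.mem_range'_1] at ha hb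
      rw [Sym2.eq_iff] at hab
      rcases hab with ⟨h1, h2⟩ | ⟨h1, h2⟩
      · have := (hf a b).1 h1
        rwa [Nat.mod_eq_of_lt (by omega), Nat.mod_eq_of_lt (by omega)] at this
      · exfalso
        have e1 : a ≡ b + 1 [MOD n] := (hf a (b+1)).1 h1
        have e2 : a + 1 ≡ b [MOD n] := (hf (a+1) b).1 h2
        have e3 : a ≡ a + 2 [MOD n] := e1.trans (e2.symm.add_right 1)
        have := (Nat.modEq_iff_dvd' (by omega)).1 e3
        have := Nat.le_of_dvd (by omega) this
        omega
    · intro hnil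
      have := congrArg Walk.length hnil
      rw [Walk.length_copy, walkSeg_length] at this
      simp at this
      omega
  · intro a
    rw [htail]
    refine List.count_eq_one_of_mem ?_ ?_
    · rw [← htail]; exact htailnd
    · obtain ⟨t, rfl⟩ := hsurj a
      rcases Nat.eq_zero_or_pos (t % n) with h | h
      · refine List.mem_map.2 ⟨n, ?_, ((hf n t).2 (by rw [Nat.mod_self, h]))⟩
        rw [List.mem_range'_1]; omega
      · refine List.mem_map.2 ⟨t % n, ?_, ((hf (t % n) t).2 (Nat.mod_mod_of_dvd t dvd_rfl))⟩
        rw [List.mem_range'_1]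
        have := Nat.mod_lt t hn0
        omega

private lemma walk_fst_const {α β : Type*} {G : SimpleGraph (α × β)} {u w : α × β}
    (q : G.Walk u w) (h : ∀ d ∈ q.darts, d.fst.1 = d.snd.1) : ∀ x ∈ q.support, x.1 = u.1 := by
  induction q with
  | nil => intro x hx; simp at hx; subst hx; rfl
  | @cons a b c hab q ih =>
    intro x hx
    rw [Walk.support_cons] at hx
    rcases List.mem_cons.1 hx with rfl | hx
    · rfl
    · have h0 : a.1 = b.1 := h _ (by rw [Walk.darts_cons]; exact List.mem_cons_self)
      rw [ih (fun d hd => h d (by rw [Walk.darts_cons]; exact List.mem_cons_of_mem _ hd)) x hx,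
        ← h0]

end Helpers

/-- `k` cliques of size `m` arranged in a cycle, joined by the edges `v_i w_{i+1}` where
`v_i` is the vertex `(i, 0)` and `w_i` is the vertex `(i, 1)`. -/
private def cliqueCycle (k m : ℕ) : SimpleGraph (Fin k × Fin m) where
  Adj x y := (x.1 = y.1 ∧ x.2 ≠ y.2) ∨
    (y.1.val = (x.1.val + 1) % k ∧ x.2.val = 0 ∧ y.2.val = 1) ∨
    (x.1.val = (y.1.val + 1) % k ∧ y.2.val = 0 ∧ x.2.val = 1)
  symm := by
    constructor; rintro x y (⟨h1, h2⟩ | h | h)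
    exacts [Or.inl ⟨h1.symm, h2.symm⟩, Or.inr (Or.inr h), Or.inr (Or.inl h)]
  loopless := by
    constructor; rintro x (⟨_, h⟩ | ⟨_, h0, h1⟩ | ⟨_, h0, h1⟩)
    exacts [h rfl, by omega, by omega]

/-- cyclic enumeration of the vertices of `cliqueCycle k m` -/
private def enum {k m : ℕ} (hk : 0 < k) (hm : 3 ≤ m) (j : ℕ) : Fin k × Fin m :=
  (⟨j / m % k, Nat.mod_lt _ hk⟩, ⟨(j % m + 1) % m, Nat.mod_lt _ (by omega)⟩)

section CliqueCycle
variable {k m : ℕ} (hk : 0 < k) (hm : 3 ≤ m)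

private lemma enum_eq_iff (a b : ℕ) :
    enum hk hm a = enum hk hm b ↔ a % (k * m) = b % (k * m) := by
  have hm0 : 0 < m := by omega
  have d1 : ∀ x : ℕ, x / m % k = x % (m * k) / m := fun x => (Nat.mod_mul_right_div_self x m k).symm
  have d2 : ∀ x : ℕ, x % m = x % (m * k) % m := fun x =>
    (Nat.mod_mod_of_dvd x (dvd_mul_right m k)).symm
  rw [show k * m = m * k from Nat.mul_comm k m]
  constructor
  · intro h
    rw [Prod.ext_iff, Fin.ext_iff, Fin.ext_iff] at h
    obtain ⟨h1, h2⟩ := h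
    simp only [enum] at h1 h2
    have h2' : a % m = b % m := by
      have e : a % m ≡ b % m [MOD m] := Nat.ModEq.add_right_cancel rfl h2
      have e' : a % m % m = b % m % m := e
      rwa [Nat.mod_mod_of_dvd _ dvd_rfl, Nat.mod_mod_of_dvd _ dvd_rfl] at e'
    rw [← Nat.div_add_mod (a % (m * k)) m, ← d1 a, h1, d1 b, ← d2 a, h2', d2 b,
      Nat.div_add_mod]
  · intro h
    simp only [enum, Prod.ext_iff, Fin.ext_iff]
    refine ⟨?_, ?_⟩
    · rw [d1, d1, h]
    · rw [d2 a, d2 b, h]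

private lemma enum_adj (j : ℕ) : (cliqueCycle k m).Adj (enum hk hm j) (enum hk hm (j+1)) := by
  have hm0 : 0 < m := by omega
  obtain ⟨q, r, hr, rfl⟩ : ∃ q r, r < m ∧ j = m * q + r :=
    ⟨j / m, j % m, Nat.mod_lt _ hm0, (Nat.div_add_mod j m).symm⟩
  have hjd : (m * q + r) / m = q := by rw [Nat.mul_add_div hm0, Nat.div_eq_of_lt hr, Nat.add_zero]
  have hjm : (m * q + r) % m = r := by rw [Nat.mul_add_mod, Nat.mod_eq_of_lt hr]
  rcases Nat.lt_or_ge r (m - 1) with h | h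
  · have hd1 : (m * q + r + 1) / m = q := by
      rw [Nat.add_assoc, Nat.mul_add_div hm0, Nat.div_eq_of_lt (by omega), Nat.add_zero]
    have hm1 : (m * q + r + 1) % m = r + 1 := by
      rw [Nat.add_assoc, Nat.mul_add_mod, Nat.mod_eq_of_lt (by omega)]
    left
    constructor
    · simp only [enum, Fin.ext_iff]; rw [hjd, hd1]
    · simp only [enum, Ne, Fin.ext_iff]
      rw [hjm, hm1]
      rcases Nat.lt_or_ge (r + 2) m with h2 | h2
      · rw [Nat.mod_eq_of_lt (by omega), Nat.mod_eq_of_lt h2]; omega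
      · have : r + 2 = m := by omega
        rw [Nat.mod_eq_of_lt (by omega), this, Nat.mod_self]; omega
  · have hrm : r = m - 1 := by omega
    have key : m * q + r + 1 = m * (q + 1) := by
      rw [Nat.mul_add, Nat.mul_one]; omega
    have hd1 : (m * q + r + 1) / m = q + 1 := by
      rw [key, Nat.mul_div_cancel_left _ hm0]
    have hm1 : (m * q + r + 1) % m = 0 := by
      rw [key, Nat.mul_mod_right]
    right; left
    refine ⟨?_, ?_, ?_⟩
    · simp only [enum]
      rw [hjd, hd1]
      exact ((Nat.mod_modEq q k).symm.add_right 1)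
    · simp only [enum]
      rw [hjm, hrm]
      have h9 : m - 1 + 1 = m := by omega
      rw [h9, Nat.mod_self]
    · simp only [enum]
      rw [hm1, Nat.zero_add, Nat.mod_eq_of_lt (by omega)]

private lemma enum_surj : Function.Surjective (enum hk hm) := by
  intro ⟨i, c⟩
  have hm0 : 0 < m := by omega
  refine ⟨m * i.val + (c.val + (m - 1)) % m, ?_⟩
  have h1 : (m * i.val + (c.val + (m - 1)) % m) / m = i.val := by
    rw [Nat.mul_add_div hm0, Nat.div_eq_of_lt (Nat.mod_lt _ hm0), Nat.add_zero]
  have h2 : (m * i.val + (c.val + (m - 1)) % m) % m = (c.val + (m - 1)) % m := by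
    rw [Nat.mul_add_mod, Nat.mod_mod_of_dvd _ dvd_rfl]
  simp only [enum, Prod.ext_iff, Fin.ext_iff]
  constructor
  · rw [h1, Nat.mod_eq_of_lt i.isLt]
  · rw [h2]
    have e1 : (c.val + (m - 1)) % m + 1 ≡ c.val + (m - 1) + 1 [MOD m] :=
      (Nat.mod_modEq _ _).add_right 1
    rw [e1]
    have e2 : c.val + (m - 1) + 1 = c.val + m := by omega
    rw [e2, Nat.add_mod_right, Nat.mod_eq_of_lt c.isLt]

include hk hm in
private lemma cliqueCycle_hamiltonian : (cliqueCycle k m).IsHamiltonian := by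
  refine isHamiltonian_of_cyclic (n := k * m) ?_ (by simp) (enum hk hm)
    (enum_eq_iff hk hm) (enum_surj hk hm) (enum_adj hk hm)
  have : m ≤ k * m := Nat.le_mul_of_pos_left m hk
  omega

end CliqueCycle

section Indep
variable {k m : ℕ}

private lemma indep_bound (s : Finset (Fin k × Fin m))
    (hs : ∀ u ∈ s, ∀ v ∈ s, u ≠ v → ¬ (cliqueCycle k m).Adj u v) : s.card ≤ k := by
  have hinj : Set.InjOn Prod.fst (s : Set (Fin k × Fin m)) := by
    intro x hx y hy hxy
    by_contra hne
    exact hs x hx y hy hne (Or.inl ⟨hxy, fun h2 => hne (Prod.ext hxy h2)⟩)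
  calc s.card = (s.image Prod.fst).card := (Finset.card_image_of_injOn hinj).symm
    _ ≤ Finset.univ.card := Finset.card_le_univ _
    _ = k := by simp

private lemma indep_exists (hm : 3 ≤ m) : ∃ s : Finset (Fin k × Fin m),
    (∀ u ∈ s, ∀ v ∈ s, u ≠ v → ¬ (cliqueCycle k m).Adj u v) ∧ s.card = k := by
  refine ⟨Finset.univ.image (fun a : Fin k => (a, (⟨2, by omega⟩ : Fin m))), ?_, ?_⟩
  · intro u hu v hv huv
    simp only [Finset.mem_image, Finset.mem_univ, true_and] at hu hv
    obtain ⟨a, rfl⟩ := hu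
    obtain ⟨b, rfl⟩ := hv
    rintro (⟨h1, h2⟩ | ⟨h1, h2, h3⟩ | ⟨h1, h2, h3⟩)
    · exact h2 rfl
    · simp at h2
    · simp at h3
  · rw [Finset.card_image_of_injective _ (fun a b h => (Prod.ext_iff.1 h).1), Finset.card_univ]
    simp

end Indep

/-- the connector edge joining clique `i` to clique `i+1` -/
private def conn {k m : ℕ} (hk : 0 < k) (hm : 3 ≤ m) (i : ℕ) : Sym2 (Fin k × Fin m) :=
  s(((⟨i % k, Nat.mod_lt _ hk⟩ : Fin k), (⟨0, by omega⟩ : Fin m)),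
    ((⟨(i+1) % k, Nat.mod_lt _ hk⟩ : Fin k), (⟨1, by omega⟩ : Fin m)))

/-- the coloring "is in clique `(i+1) % k`" -/
private def col {k m : ℕ} (i : ℕ) : Fin k × Fin m → Bool := fun x => decide (x.1.val = (i+1) % k)

section NoCycle
variable {k m : ℕ} (hk : 0 < k) (hm : 3 ≤ m)

private lemma mod_succ_ne {k : ℕ} (hk2 : 2 ≤ k) (i : ℕ) : i % k ≠ (i + 1) % k := by
  intro h
  have h1 : k ∣ 1 := by simpa using (Nat.modEq_iff_dvd' (Nat.le_succ i)).1 h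
  exact absurd (Nat.le_of_dvd one_pos h1) (by omega)

private lemma succ_mod_succ {k : ℕ} (i : ℕ) : (i % k + 1) % k = (i + 1) % k :=
  (Nat.mod_modEq i k).add_right 1

private lemma conn_ne_succ (hk2 : 2 ≤ k) (i : ℕ) : conn hk hm i ≠ conn hk hm (i + 1) := by
  intro h
  rw [conn, conn, Sym2.eq_iff] at h
  simp only [Prod.mk.injEq, Fin.mk.injEq] at h
  rcases h with ⟨⟨h1, _⟩, _⟩ | ⟨⟨_, h2⟩, _⟩
  · exact mod_succ_ne hk2 i h1
  · omega

private lemma dart_cross_iff (hk2 : 2 ≤ k) (i : ℕ) (d : (cliqueCycle k m).Dart) :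
    (col (m := m) i d.fst != col i d.snd) = true ↔
      (d.edge = conn hk hm i ∨ d.edge = conn hk hm (i + 1)) := by
  have h21 : i + 1 + 1 = i + 2 := rfl
  simp only [col, bne_iff_ne, ne_eq, decide_eq_decide]
  constructor
  · intro hcross
    rcases d.adj with ⟨h1, _⟩ | ⟨h1, h2, h3⟩ | ⟨h1, h2, h3⟩
    · exact absurd (by rw [h1]) hcross
    · by_cases ha : d.fst.1.val = (i+1) % k
      · right
        show s(d.fst, d.snd) = _
        rw [conn, Sym2.eq_iff]
        simp only [Prod.ext_iff, Fin.ext_iff]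
        left
        refine ⟨⟨ha, h2⟩, ?_, h3⟩
        rw [h1, ha]
        exact succ_mod_succ (i+1)
      · have hb : d.snd.1.val = (i+1) % k := by tauto
        have hfst : d.fst.1.val = i % k := by
          have e : d.fst.1.val + 1 ≡ i + 1 [MOD k] := by
            show _ % k = _ % k
            rw [← h1, hb]
          have e' := Nat.ModEq.add_right_cancel' 1 e
          rw [← Nat.mod_eq_of_lt d.fst.1.isLt]
          exact e'
        left
        show s(d.fst, d.snd) = _
        rw [conn, Sym2.eq_iff]
        simp only [Prod.ext_iff, Fin.ext_iff]
        left
        exact ⟨⟨hfst, h2⟩, hb, h3⟩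
    · by_cases ha : d.snd.1.val = (i+1) % k
      · right
        show s(d.fst, d.snd) = _
        rw [conn, Sym2.eq_iff]
        simp only [Prod.ext_iff, Fin.ext_iff]
        right
        refine ⟨⟨?_, h3⟩, ha, h2⟩
        rw [h1, ha]
        exact succ_mod_succ (i+1)
      · have hb : d.fst.1.val = (i+1) % k := by tauto
        have hsnd : d.snd.1.val = i % k := by
          have e : d.snd.1.val + 1 ≡ i + 1 [MOD k] := by
            show _ % k = _ % k
            rw [← h1, hb]
          have e' := Nat.ModEq.add_right_cancel' 1 e
          rw [← Nat.mod_eq_of_lt d.snd.1.isLt]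
          exact e'
        left
        show s(d.fst, d.snd) = _
        rw [conn, Sym2.eq_iff]
        simp only [Prod.ext_iff, Fin.ext_iff]
        right
        exact ⟨⟨by rw [h1, hsnd]; exact succ_mod_succ i, h3⟩, hsnd, h2⟩
  · intro h
    have hne1 : i % k ≠ (i + 1) % k := mod_succ_ne hk2 i
    have hne2 : (i + 2) % k ≠ (i + 1) % k := fun hh => mod_succ_ne hk2 (i+1) (by rw [h21]; exact hh.symm)
    rcases h with h | h
    · have h' : s(d.fst, d.snd) = conn hk hm i := h
      rw [conn, Sym2.eq_iff] at h'
      rcases h' with ⟨e1, e2⟩ | ⟨e1, e2⟩ <;> rw [e1, e2] <;> simp <;> tauto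
    · have h' : s(d.fst, d.snd) = conn hk hm (i+1) := h
      rw [conn, Sym2.eq_iff] at h'
      rcases h' with ⟨e1, e2⟩ | ⟨e1, e2⟩ <;> rw [e1, e2] <;> simp [h21] <;> tauto

end NoCycle

section Main
variable {k m : ℕ}

private lemma no_short_cycle (hk5 : 5 ≤ k) (hm3 : 3 ≤ m) (hmk : m + 2 ≤ k) :
    ¬ ∃ (v : Fin k × Fin m) (p : (cliqueCycle k m).Walk v v),
        p.IsCycle ∧ p.length = k - 1 := by
  rintro ⟨v, p, hcyc, hlen⟩
  have hk0 : 0 < k := by omega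
  have hsuplen : p.support.length = p.length + 1 := p.length_support
  by_cases hcross : ∃ d ∈ p.darts, d.fst.1 ≠ d.snd.1
  · -- some connector dart exists: all connectors are used, so at least 2k vertices
    obtain ⟨d, hd, hne⟩ := hcross
    have hedge : d.edge ∈ p.edges := List.mem_map_of_mem hd
    have hconn0 : ∃ j, conn hk0 hm3 j ∈ p.edges := by
      rcases d.adj with ⟨h1, _⟩ | ⟨h1, h2, h3⟩ | ⟨h1, h2, h3⟩
      · exact absurd h1 hne
      · refine ⟨d.fst.1.val, ?_⟩
        have e : d.edge = conn hk0 hm3 d.fst.1.val := by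
          show s(d.fst, d.snd) = _
          rw [conn, Sym2.eq_iff]
          simp only [Prod.ext_iff, Fin.ext_iff]
          exact Or.inl ⟨⟨(Nat.mod_eq_of_lt d.fst.1.isLt).symm, h2⟩, h1, h3⟩
        rwa [← e]
      · refine ⟨d.snd.1.val, ?_⟩
        have e : d.edge = conn hk0 hm3 d.snd.1.val := by
          show s(d.fst, d.snd) = _
          rw [conn, Sym2.eq_iff]
          simp only [Prod.ext_iff, Fin.ext_iff]
          exact Or.inr ⟨⟨h1, h3⟩, (Nat.mod_eq_of_lt d.snd.1.isLt).symm, h2⟩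
        rwa [← e]
    obtain ⟨j, hj⟩ := hconn0
    have hnodup : p.edges.Nodup := hcyc.isCircuit.isTrail.edges_nodup
    have hle : ∀ i, p.edges.count (conn hk0 hm3 i) ≤ 1 :=
      fun i => List.nodup_iff_count_le_one.1 hnodup _
    have hstep : ∀ i, p.edges.count (conn hk0 hm3 i) = p.edges.count (conn hk0 hm3 (i+1)) := by
      intro i
      have hpar := crossings_parity (col (m := m) i) p
      rw [if_pos rfl] at hpar
      have hcong : (p.darts.countP fun d => col (m := m) i d.fst != col i d.snd)
          = p.darts.countP (fun d =>
            decide (d.edge = conn hk0 hm3 i) || decide (d.edge = conn hk0 hm3 (i+1))) := by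
        refine List.countP_congr (fun d _ => ?_)
        rw [dart_cross_iff hk0 hm3 (by omega) i d]
        simp
      rw [hcong, countP_or_disjoint _ _ _ ?_] at hpar
      · have hc1 : p.darts.countP (fun d => decide (d.edge = conn hk0 hm3 i))
            = p.edges.count (conn hk0 hm3 i) := (count_map_eq_countP _ _ _).symm
        have hc2 : p.darts.countP (fun d => decide (d.edge = conn hk0 hm3 (i+1)))
            = p.edges.count (conn hk0 hm3 (i+1)) := (count_map_eq_countP _ _ _).symm
        rw [hc1, hc2] at hpar
        have := hle i
        have := hle (i+1)
        omega
      · intro d _ hdd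
        simp only [decide_eq_true_eq] at hdd
        exact conn_ne_succ hk0 hm3 (by omega) i (hdd.1.symm.trans hdd.2)
    have hall : ∀ i, p.edges.count (conn hk0 hm3 i) = p.edges.count (conn hk0 hm3 0) := by
      intro i
      induction i with
      | zero => rfl
      | succ n ih => rw [← hstep n, ih]
    have hone : ∀ i, conn hk0 hm3 i ∈ p.edges := by
      intro i
      have h0 : 0 < p.edges.count (conn hk0 hm3 j) := List.count_pos_iff.2 hj
      have he : p.edges.count (conn hk0 hm3 i) = p.edges.count (conn hk0 hm3 j) := by
        rw [hall i, hall j]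
      exact List.count_pos_iff.1 (by omega)
    have hv0 : ∀ a : Fin k, ((a, (⟨0, by omega⟩ : Fin m)) : Fin k × Fin m) ∈ p.support := by
      intro a
      have h := hone a.val
      have e : (⟨a.val % k, Nat.mod_lt _ hk0⟩ : Fin k) = a := Fin.ext (Nat.mod_eq_of_lt a.isLt)
      rw [conn, e] at h
      exact p.fst_mem_support_of_mem_edges h
    have hv1 : ∀ a : Fin k, ((a, (⟨1, by omega⟩ : Fin m)) : Fin k × Fin m) ∈ p.support := by
      intro a
      have h := hone (a.val + (k - 1))
      have e2 : (a.val + (k-1) + 1) % k = a.val := by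
        have e3 : a.val + (k-1) + 1 = a.val + k := by omega
        rw [e3, Nat.add_mod_right, Nat.mod_eq_of_lt a.isLt]
      have e : (⟨(a.val + (k-1) + 1) % k, Nat.mod_lt _ hk0⟩ : Fin k) = a := Fin.ext e2
      rw [conn, e] at h
      exact p.snd_mem_support_of_mem_edges h
    classical
    have hsub : (Finset.univ.image (fun a : Fin k => ((a, (⟨0, by omega⟩ : Fin m)) : Fin k × Fin m)))
        ∪ (Finset.univ.image (fun a : Fin k => ((a, (⟨1, by omega⟩ : Fin m)) : Fin k × Fin m)))
        ⊆ p.support.toFinset := by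
      intro x hx
      rw [List.mem_toFinset]
      rcases Finset.mem_union.1 hx with hx | hx <;>
        · obtain ⟨a, _, rfl⟩ := Finset.mem_image.1 hx
          first
          | exact hv0 a
          | exact hv1 a
    have hdisj : Disjoint
        (Finset.univ.image (fun a : Fin k => ((a, (⟨0, by omega⟩ : Fin m)) : Fin k × Fin m)))
        (Finset.univ.image (fun a : Fin k => ((a, (⟨1, by omega⟩ : Fin m)) : Fin k × Fin m))) := by
      rw [Finset.disjoint_left]
      intro x hx0 hx1
      obtain ⟨a, _, rfl⟩ := Finset.mem_image.1 hx0
      obtain ⟨b, _, hb⟩ := Finset.mem_image.1 hx1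
      have := congrArg (fun z : Fin k × Fin m => z.2.val) hb
      simp at this
    have hcard : ((Finset.univ.image (fun a : Fin k => ((a, (⟨0, by omega⟩ : Fin m)) : Fin k × Fin m)))
        ∪ (Finset.univ.image (fun a : Fin k => ((a, (⟨1, by omega⟩ : Fin m)) : Fin k × Fin m)))).card
        = k + k := by
      rw [Finset.card_union_of_disjoint hdisj,
        Finset.card_image_of_injective _ (fun a b h => (Prod.ext_iff.1 h).1),
        Finset.card_image_of_injective _ (fun a b h => (Prod.ext_iff.1 h).1),
        Finset.card_univ, Fintype.card_fin]
    have h2k := Finset.card_le_card hsub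
    rw [hcard] at h2k
    have := p.support.toFinset_card_le
    omega
  · -- no connector dart: cycle stays in one clique
    push_neg at hcross
    have hsupp := walk_fst_const p hcross
    have hnd : p.support.tail.Nodup := hcyc.support_nodup
    classical
    have hsub : p.support.tail.toFinset ⊆
        Finset.univ.image (fun c : Fin m => ((v.1, c) : Fin k × Fin m)) := by
      intro x hx
      rw [List.mem_toFinset] at hx
      have hx1 := hsupp x (List.mem_of_mem_tail hx)
      refine Finset.mem_image.2 ⟨x.2, Finset.mem_univ _, ?_⟩
      rw [← hx1]
    have hcard := Finset.card_le_card hsub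
    rw [List.toFinset_card_of_nodup hnd] at hcard
    have h1 : p.support.tail.length = p.length := by
      rw [List.length_tail, hsuplen]
      omega
    have h2 : (Finset.univ.image (fun c : Fin m => ((v.1, c) : Fin k × Fin m))).card ≤ m := by
      calc (Finset.univ.image (fun c : Fin m => ((v.1, c) : Fin k × Fin m))).card
          ≤ Finset.univ.card := Finset.card_image_le.trans (le_of_eq rfl)
        _ = m := by simp
    omega

end Main

/-- For every integer `k ≥ 5` there is a Hamiltonian graph on exactly `k(k-2)`
vertices with independence number exactly `k` containing no cycle of length `k - 1`
(hence not pancyclic). -/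
theorem exists_hamiltonian_not_pancyclic (k : ℕ) (hk : 5 ≤ k) :
    ∃ G : SimpleGraph (Fin (k * (k - 2))),
      G.IsHamiltonian ∧
      (∀ s : Finset (Fin (k * (k - 2))),
        (∀ u ∈ s, ∀ v ∈ s, u ≠ v → ¬ G.Adj u v) → s.card ≤ k) ∧
      (∃ s : Finset (Fin (k * (k - 2))),
        (∀ u ∈ s, ∀ v ∈ s, u ≠ v → ¬ G.Adj u v) ∧ s.card = k) ∧
      ¬ ∃ (v : Fin (k * (k - 2))) (cyc : G.Walk v v),
          cyc.IsCycle ∧ cyc.length = k - 1 := by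
  obtain ⟨n, rfl⟩ : ∃ n, k = n + 5 := ⟨k - 5, by omega⟩

  set K := n + 5 with hK
  set M := n + 3 with hM
  have hK5 : 5 ≤ K := by omega
  have hM3 : 3 ≤ M := by omega
  have hK0 : 0 < K := by omega
  set e : Fin K × Fin M ≃ Fin (K * M) := finProdFinEquiv with he
  set H := cliqueCycle K M with hH
  refine ⟨H.comap ⇑e.symm, ?_, ?_, ?_, ?_⟩
  · -- Hamiltonian
    intro _
    have hcard : Fintype.card (Fin K × Fin M) ≠ 1 := by
      have : M ≤ K * M := Nat.le_mul_of_pos_left M hK0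
      simp only [Fintype.card_prod, Fintype.card_fin]
      omega
    obtain ⟨a, q, hq⟩ := cliqueCycle_hamiltonian hK0 hM3 hcard
    let φ : H →g H.comap ⇑e.symm :=
      ⟨⇑e, by intro a b hab; simpa using hab⟩
    exact ⟨e a, q.map φ, hq.map (f := φ) e.bijective⟩
  · -- independence number at most K
    intro s hs
    have hind : ∀ u ∈ s.image ⇑e.symm, ∀ v ∈ s.image ⇑e.symm, u ≠ v → ¬ H.Adj u v := by
      intro u hu v hv huv
      obtain ⟨u0, hu0, rfl⟩ := Finset.mem_image.1 hu
      obtain ⟨v0, hv0, rfl⟩ := Finset.mem_image.1 hv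
      exact hs u0 hu0 v0 hv0 (fun h => huv (by rw [h]))
    have := indep_bound _ hind
    rwa [Finset.card_image_of_injective _ e.symm.injective] at this
  · -- independent set of size K
    obtain ⟨t, ht, htc⟩ := indep_exists (k := K) hM3
    refine ⟨t.image ⇑e, ?_, ?_⟩
    · intro u hu v hv huv
      obtain ⟨a, ha, rfl⟩ := Finset.mem_image.1 hu
      obtain ⟨b, hb, rfl⟩ := Finset.mem_image.1 hv
      intro hadj
      have hab : H.Adj a b := by simpa using hadj
      exact ht a ha b hb (fun h => huv (by rw [h])) hab
    · rw [Finset.card_image_of_injective _ e.injective, htc]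
  · -- no cycle of length K - 1
    rintro ⟨v, cyc, hc, hl⟩
    let ψ : H.comap ⇑e.symm →g H := ⟨⇑e.symm, fun {a b} hab => hab⟩
    have hinj : Function.Injective ⇑ψ := e.symm.injective
    refine no_short_cycle hK5 hM3 (by omega) ⟨e.symm v, cyc.map ψ, ?_, ?_⟩
    · exact (Walk.map_isCycle_iff_of_injective hinj).2 hc
    · rw [Walk.length_map]; exact hl
end

section
/- Let f : ℕ → ℕ and suppose that for every positive integer k, every Hamiltonian graph on m ≥ f(k) vertices with independence number at most k contains a cycle of length m − 1. Then for every real constant C ≥ 1 and every positive integer k, every Hamiltonian graph G on n ≥ C·f(k) vertices with independence number α(G) ≤ k contains a cycle of length ℓ for every integer ℓ with n/C ≤ ℓ ≤ n. -/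
open SimpleGraph

/-- Lift a walk whose support lies in the range of an embedding to the comap graph. -/
lemma lift_walk {V W : Type*} {G : SimpleGraph V} (f : W ↪ V) :
    ∀ {u v : V} (p : G.Walk u v) (u' : W) (hu : f u' = u),
      (∀ x ∈ p.support, ∃ y, f y = x) →
      ∃ (v' : W) (hv : f v' = v) (q : (G.comap f).Walk u' v'),
        q.map (SimpleGraph.Embedding.comap f G).toHom = p.copy hu.symm hv.symm := by
  intro u v p
  induction p with
  | nil =>
    intro u' hu _
    exact ⟨u', hu, Walk.nil, by subst hu; rfl⟩
  | @cons a b c h p ih =>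
    intro u' hu hsup
    obtain ⟨b', hb⟩ := hsup b (by simp)
    have hadj : (G.comap f).Adj u' b' := by
      simp only [comap_adj, Function.Embedding.coeFn_mk, hu, hb]; exact h
    obtain ⟨v', hv, q, hq⟩ := ih b' hb (fun x hx => hsup x (by simp [hx]))
    refine ⟨v', hv, Walk.cons hadj q, ?_⟩
    subst hu; subst hb; subst hv
    simp only [Walk.map_cons, Walk.copy_rfl_rfl] at hq ⊢
    rw [hq]
    rfl

/-- A triangle in the complete graph on `Fin 3`. -/
def triWalk : (⊤ : SimpleGraph (Fin 3)).Walk 0 0 :=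
  .cons (show (⊤ : SimpleGraph (Fin 3)).Adj 0 1 by decide)
    (.cons (show (⊤ : SimpleGraph (Fin 3)).Adj 1 2 by decide)
      (.cons (show (⊤ : SimpleGraph (Fin 3)).Adj 2 0 by decide) .nil))

lemma triWalk_isHamCycle : triWalk.IsHamiltonianCycle := by
  rw [Walk.isHamiltonianCycle_iff_isCycle_and_support_count_tail_eq_one]
  refine ⟨?_, by decide⟩
  rw [Walk.isCycle_def, Walk.isTrail_def]
  refine ⟨by decide, by simp [triWalk], by decide⟩

lemma top3_ham : (⊤ : SimpleGraph (Fin 3)).IsHamiltonian :=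
  fun _ => ⟨0, triWalk, triWalk_isHamCycle⟩

lemma top3_indep {k : ℕ} (hk : 0 < k) : IndepLE (⊤ : SimpleGraph (Fin 3)) k := by
  intro s hs
  have : s.card ≤ 1 := Finset.card_le_one.2 (by
    intro a ha b hb
    by_contra hne
    exact hs a ha b hb hne hne)
  omega

/-- If for every positive `k` every Hamiltonian graph on `m ≥ f(k)` vertices with
independence number at most `k` contains a cycle of length `m - 1`, then for every
real `C ≥ 1`, every positive `k`, and every Hamiltonian graph `G` on `n ≥ C·f(k)`
vertices with independence number at most `k`, `G` contains a cycle of length `ℓ`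
for every integer `n/C ≤ ℓ ≤ n`. -/
theorem linear_cycles_of_cycle_sub_one (f : ℕ → ℕ)
    (hf : ∀ k : ℕ, 0 < k → ∀ m : ℕ, f k ≤ m →
      ∀ G : SimpleGraph (Fin m), G.IsHamiltonian → IndepLE G k →
      ∃ (v : Fin m) (cyc : G.Walk v v), cyc.IsCycle ∧ cyc.length = m - 1) :
    ∀ C : ℝ, 1 ≤ C → ∀ k : ℕ, 0 < k → ∀ n : ℕ,
      C * (f k : ℝ) ≤ (n : ℝ) →
      ∀ G : SimpleGraph (Fin n), G.IsHamiltonian → IndepLE G k →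
      ∀ ℓ : ℕ, (n : ℝ) / C ≤ (ℓ : ℝ) → ℓ ≤ n →
      ∃ (v : Fin n) (cyc : G.Walk v v), cyc.IsCycle ∧ cyc.length = ℓ := by
  intro C hC k hk n hn G hG hI ℓ hl1 hl2
  -- first, f k ≥ 4
  have hfk4 : 4 ≤ f k := by
    by_contra h
    push_neg at h
    obtain ⟨v, cyc, hc, hlen⟩ := hf k hk 3 (by omega) ⊤ top3_ham (top3_indep hk)
    have := hc.three_le_length
    omega
  -- f k ≤ ℓ
  have hC0 : (0:ℝ) < C := lt_of_lt_of_le one_pos hC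
  have hfkl : f k ≤ ℓ := by
    have h1 : (f k : ℝ) ≤ (n : ℝ) / C := by
      rw [le_div_iff₀ hC0, mul_comm]; exact hn
    exact_mod_cast h1.trans hl1
  clear hn hl1 hC hC0
  -- main induction
  induction n using Nat.strong_induction_on with
  | _ n ih =>
  rcases eq_or_lt_of_le hl2 with rfl | hlt
  · -- ℓ = n : use the Hamiltonian cycle itself
    obtain ⟨v, p, hp⟩ := hG (by simp [Fintype.card_fin]; omega)
    exact ⟨v, p, hp.isCycle, by simpa using hp.length_eq⟩
  · -- ℓ < n : pass to a cycle of length n - 1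
    obtain ⟨v, cyc, hc, hlen⟩ := hf k hk n (by omega) G hG hI
    -- the support of cyc
    have hnn : ¬ cyc.Nil := hc.not_nil
    have hv_tail : v ∈ cyc.support.tail := by
      cases cyc with
      | nil => simp at hnn
      | cons h p => simpa using p.end_mem_support
    have hnodup : cyc.support.tail.Nodup := hc.2
    have htail_len : cyc.support.tail.length = n - 1 := by
      have := cyc.length_support
      simp only [List.length_tail, this]
      omega
    have hTcard : cyc.support.toFinset.card = n - 1 := by
      rw [cyc.support_eq_cons, List.toFinset_cons,
        Finset.insert_eq_self.2 (List.mem_toFinset.2 hv_tail),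
        List.toFinset_card_of_nodup hnodup, htail_len]
    -- embedding Fin (n-1) ↪ Fin n with range the support
    set T : Finset (Fin n) := cyc.support.toFinset with hT
    let e : Fin (n-1) ≃ ↥T := (T.equivFinOfCardEq hTcard).symm
    let g : Fin (n-1) ↪ Fin n := e.toEmbedding.trans (Function.Embedding.subtype _)
    have hrange : ∀ x ∈ cyc.support, ∃ y, g y = x := by
      intro x hx
      refine ⟨e.symm ⟨x, List.mem_toFinset.2 hx⟩, ?_⟩
      simp [g, Function.Embedding.trans]
    -- lift the cycle
    obtain ⟨u0, hu0⟩ := hrange v cyc.start_mem_support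
    obtain ⟨v', hv', q, hq⟩ := lift_walk g cyc u0 hu0 hrange
    obtain rfl : u0 = v' := g.injective (hu0.trans hv'.symm)
    have hinj : Function.Injective ((Embedding.comap g G).toHom : Fin (n-1) → Fin n) :=
      (Embedding.comap g G).injective
    -- q is a cycle of length n - 1
    have hmapc : (q.map (Embedding.comap g G).toHom).IsCycle := by
      exact hq ▸ (Walk.isCycle_copy _ _).2 hc
    have hqc : q.IsCycle := (Walk.map_isCycle_iff_of_injective hinj).1 hmapc
    have hqlen : q.length = n - 1 := by
      have := (Walk.length_map _ q).symm.trans (congrArg Walk.length hq)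
      simpa [hlen] using this
    -- q is a Hamiltonian cycle in the comap graph
    have hqtail_len : q.support.tail.length = n - 1 := by
      have := q.length_support
      simp only [List.length_tail, this]
      omega
    have huniv : q.support.tail.toFinset = (Finset.univ : Finset (Fin (n-1))) := by
      apply Finset.eq_univ_of_card
      rw [List.toFinset_card_of_nodup hqc.2, hqtail_len, Fintype.card_fin]
    have hqham : q.IsHamiltonianCycle := by
      rw [Walk.isHamiltonianCycle_iff_isCycle_and_support_count_tail_eq_one]
      refine ⟨hqc, fun a => List.count_eq_one_of_mem hqc.2 ?_⟩
      rw [← List.mem_toFinset, huniv]; exact Finset.mem_univ a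
    have hG' : (G.comap g).IsHamiltonian := fun _ => ⟨u0, q, hqham⟩
    have hI' : IndepLE (G.comap (g : Fin (n-1) → Fin n)) k := by
      intro s hs
      have hcard : (s.image g).card = s.card := Finset.card_image_of_injective s g.injective
      rw [← hcard]
      apply hI
      intro x hx y hy hxy
      obtain ⟨x', hx', rfl⟩ := Finset.mem_image.1 hx
      obtain ⟨y', hy', rfl⟩ := Finset.mem_image.1 hy
      have hne : x' ≠ y' := fun h => hxy (by rw [h])
      exact hs x' hx' y' hy' hne
    -- apply the induction hypothesis to the smaller graph
    obtain ⟨w, c, hcc, hclen⟩ := ih (n-1) (by omega) (G.comap g) hG' hI' (by omega)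
    refine ⟨g w, c.map (Embedding.comap g G).toHom, hcc.map hinj, ?_⟩
    exact (Walk.length_map _ c).trans hclen
end

section
/- Let G be a graph on n vertices with independence number α(G) ≤ k, and let d be a positive integer. Then G contains an induced subgraph on at least n − k·d vertices whose minimum degree is at least d. -/
lemma aux_min_degree {V : Type*} [Fintype V] [DecidableEq V]
    (G : SimpleGraph V) [DecidableRel G.Adj] (d : ℕ) (hd : 0 < d) :
    ∀ m k : ℕ, ∀ s : Finset V, s.card ≤ m →
      (∀ t ⊆ s, (∀ u ∈ t, ∀ v ∈ t, u ≠ v → ¬ G.Adj u v) → t.card ≤ k) →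
      ∃ s' ⊆ s, s.card - k * d ≤ s'.card ∧
        ∀ v ∈ s', d ≤ (s'.filter (fun u => G.Adj v u)).card := by
  intro m
  induction m with
  | zero =>
    intro k s hs _
    have : s = ∅ := Finset.card_eq_zero.mp (Nat.le_zero.mp hs)
    subst this
    exact ⟨∅, Finset.Subset.refl _, by simp, by simp⟩
  | succ m ih =>
    intro k s hs hidx
    by_cases hgood : ∀ v ∈ s, d ≤ (s.filter (fun u => G.Adj v u)).card
    · exact ⟨s, Finset.Subset.refl _, Nat.sub_le _ _, hgood⟩
    push_neg at hgood
    obtain ⟨v, hv, hvd⟩ := hgood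
    match k with
    | 0 =>
      have h1 : ({v} : Finset V).card ≤ 0 := by
        apply hidx
        · simpa using hv
        · intro u hu w hw huw
          simp only [Finset.mem_singleton] at hu hw
          subst hu; subst hw; exact absurd rfl huw
      simp at h1
    | k + 1 =>
      set N := s.filter (fun u => G.Adj v u) with hN
      set R := insert v N with hR
      set s₂ := s \ R with hs₂
      have hRs : R ⊆ s := by
        intro x hx
        rcases Finset.mem_insert.mp hx with h | h
        · subst h; exact hv
        · exact (Finset.mem_filter.mp h).1
      have hRcard : R.card ≤ d := by
        have h1 := Finset.card_insert_le v N
        have h2 : R.card = (insert v N).card := by rw [hR]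
        omega
      have hs₂card : s₂.card = s.card - R.card := Finset.card_sdiff_of_subset hRs
      have hvR : v ∈ R := Finset.mem_insert_self _ _
      have hs₂m : s₂.card ≤ m := by
        have hRpos : 0 < R.card := Finset.card_pos.mpr ⟨v, hvR⟩
        omega
      have hidx₂ : ∀ t ⊆ s₂, (∀ u ∈ t, ∀ w ∈ t, u ≠ w → ¬ G.Adj u w) → t.card ≤ k := by
        intro t hts hti
        have hvt : v ∉ t := fun h => (Finset.mem_sdiff.mp (hts h)).2 hvR
        have hins : (insert v t).card ≤ k + 1 := by
          apply hidx
          · intro x hx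
            rcases Finset.mem_insert.mp hx with h | h
            · subst h; exact hv
            · exact (Finset.mem_sdiff.mp (hts h)).1
          · intro u hu w hw huw
            have hnadj : ∀ x ∈ t, ¬ G.Adj v x := by
              intro x hx hadj
              have hxs : x ∈ s := (Finset.mem_sdiff.mp (hts hx)).1
              have : x ∈ R := Finset.mem_insert_of_mem
                (Finset.mem_filter.mpr ⟨hxs, hadj⟩)
              exact (Finset.mem_sdiff.mp (hts hx)).2 this
            rcases Finset.mem_insert.mp hu with h | h <;>
              rcases Finset.mem_insert.mp hw with h' | h'
            · subst h; subst h'; exact absurd rfl huw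
            · subst h; exact hnadj w h'
            · subst h'; intro hadj; exact hnadj u h hadj.symm
            · exact hti u h w h' huw
        rw [Finset.card_insert_of_notMem hvt] at hins
        omega
      obtain ⟨s', hs's₂, hcard, hdeg⟩ := ih k s₂ hs₂m hidx₂
      refine ⟨s', hs's₂.trans (Finset.sdiff_subset), ?_, hdeg⟩
      have : s.card - (k + 1) * d ≤ s₂.card - k * d := by
        rw [hs₂card]
        have : (k + 1) * d = k * d + d := by ring
        omega
      omega

/-- If `G` is a graph on `n` vertices with `α(G) ≤ k` and `d` is a positive integer,
then `G` contains an induced subgraph on at least `n - k·d` vertices all of whose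
vertices have at least `d` neighbors inside it (i.e. with minimum degree ≥ `d`). -/
theorem induced_subgraph_min_degree {V : Type*} [Fintype V] [DecidableEq V]
    (G : SimpleGraph V) [DecidableRel G.Adj] (n k d : ℕ)
    (hn : Fintype.card V = n) (hind : IndepLE G k) (hd : 0 < d) :
    ∃ s : Finset V, n - k * d ≤ s.card ∧
      ∀ v ∈ s, d ≤ (s.filter (fun u => G.Adj v u)).card := by
  obtain ⟨s', _, hcard, hdeg⟩ := aux_min_degree G d hd (Fintype.card V) k Finset.univ
    (by simp) (fun t _ hti => hind t hti)
  refine ⟨s', ?_, hdeg⟩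
  rwa [Finset.card_univ, hn] at hcard
end

section
/- Let G be a graph on n vertices with a Hamilton cycle v_0, v_1, …, v_{n−1}, v_0, and let a, b, c, d be indices with 0 ≤ a < b < c < d ≤ n − 1 such that {v_a, v_c} and {v_b, v_d} are edges of G. Then G contains a cycle of length n − (b − a − 1) − (d − c − 1); in particular, this cycle contains all vertices of G except those v_i with a < i < b or c < i < d. -/
open SimpleGraph
open Fin.NatCast

section
variable {n : ℕ} [NeZero n] {G : SimpleGraph (Fin n)}

def upWalk (G : SimpleGraph (Fin n)) (h : ∀ i : Fin n, G.Adj i (i + 1)) (i : Fin n) :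
    (k : ℕ) → G.Walk i (i + (k : Fin n))
  | 0 => Walk.nil.copy rfl (by simp)
  | k+1 => (Walk.cons (h i) (upWalk G h (i+1) k)).copy rfl (by push_cast; abel)

lemma upWalk_length (h : ∀ i : Fin n, G.Adj i (i + 1)) (i : Fin n) (k : ℕ) :
    (upWalk G h i k).length = k := by
  induction k generalizing i with
  | zero => simp [upWalk, List.range_succ]
  | succ k ih => simp [upWalk, ih]

lemma upWalk_support (h : ∀ i : Fin n, G.Adj i (i + 1)) (i : Fin n) (k : ℕ) :
    (upWalk G h i k).support = (List.range (k+1)).map (fun (j : ℕ) => i + (j : Fin n)) := by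
  induction k generalizing i with
  | zero => simp [upWalk, List.range_succ]
  | succ k ih =>
      rw [List.range_succ_eq_map]
      simp only [upWalk, Walk.support_copy, Walk.support_cons, ih, List.map_cons, List.map_map]
      congr 1
      · simp
      · apply List.map_congr_left
        intro j hj
        simp only [Function.comp_apply]
        push_cast
        abel

lemma upWalk_edges (h : ∀ i : Fin n, G.Adj i (i + 1)) (i : Fin n) (k : ℕ) :
    (upWalk G h i k).edges =
      (List.range k).map (fun (j : ℕ) => s(i + (j : Fin n), i + (j : Fin n) + 1)) := by
  induction k generalizing i with
  | zero => simp [upWalk, List.range_succ]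
  | succ k ih =>
      rw [List.range_succ_eq_map]
      simp only [upWalk, Walk.edges_copy, Walk.edges_cons, ih, List.map_cons, List.map_map]
      congr 1
      · simp
      · apply List.map_congr_left
        intro j hj
        simp only [Function.comp_apply]
        congr 1 <;> push_cast <;> abel

lemma val_add_cast (i : Fin n) (j : ℕ) : ((i + (j : Fin n)) : Fin n).val = (i.val + j) % n := by
  rw [Fin.add_def, Fin.val_natCast]
  conv_rhs => rw [Nat.add_mod]
  simp [Nat.mod_eq_of_lt i.isLt]

lemma mod_cases' {m N : ℕ} (h : m < 2*N) : m % N = if m < N then m else m - N := by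
  split_ifs with hm
  · exact Nat.mod_eq_of_lt hm
  · rw [Nat.mod_eq_sub_mod (by omega), Nat.mod_eq_of_lt (by omega)]

lemma upWalk_support_nodup (h : ∀ i : Fin n, G.Adj i (i + 1)) (i : Fin n) {k : ℕ}
    (hk : k < n) : (upWalk G h i k).support.Nodup := by
  rw [upWalk_support]
  refine List.Nodup.map_on ?_ List.nodup_range
  intro j hj j' hj' hEq
  rw [List.mem_range] at hj hj'
  have hv := congrArg Fin.val hEq
  rw [val_add_cast, val_add_cast] at hv
  have hi := i.isLt
  rw [mod_cases' (by omega), mod_cases' (by omega)] at hv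
  split_ifs at hv <;> omega


end

/-- Let `G` be a graph on `n` vertices whose vertices are labeled `0, …, n-1` along a
Hamilton cycle (so `i` is adjacent to `i+1` mod `n` for every `i`).  If
`a < b < c < d` are indices with `{v_a, v_c}` and `{v_b, v_d}` edges of `G`, then `G`
contains a cycle of length `n - (b-a-1) - (d-c-1)` whose vertex set consists of all
vertices except those `i` with `a < i < b` or `c < i < d`. -/
theorem cycle_of_two_crossing_chords {n : ℕ} [NeZero n]
    (G : SimpleGraph (Fin n)) (hham : ∀ i : Fin n, G.Adj i (i + 1))
    (a b c d : Fin n) (hab : a < b) (hbc : b < c) (hcd : c < d)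
    (hac : G.Adj a c) (hbd : G.Adj b d) :
    ∃ (u : Fin n) (cyc : G.Walk u u), cyc.IsCycle ∧
      cyc.length = n - ((b : ℕ) - (a : ℕ) - 1) - ((d : ℕ) - (c : ℕ) - 1) ∧
      cyc.support.toFinset =
        Finset.univ.filter (fun i : Fin n =>
          ¬ ((a < i ∧ i < b) ∨ (c < i ∧ i < d))) := by
  have hA : a.1 < b.1 := hab
  have hB : b.1 < c.1 := hbc
  have hC : c.1 < d.1 := hcd
  have hD : d.1 < n := d.isLt
  set k1 : ℕ := n - d.1 + a.1 with hk1
  set k2 : ℕ := c.1 - b.1 with hk2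
  have hk1n : k1 < n := by omega
  have hk2n : k2 < n := by omega
  have key : ∀ (i : Fin n) (j : ℕ), j ≤ n →
      ((i + (j : Fin n)).val = if i.1 + j < n then i.1 + j else i.1 + j - n) := by
    intro i j hj
    rw [val_add_cast, mod_cases' (by have := i.isLt; omega)]
  have hda : d + (k1 : Fin n) = a := by
    apply Fin.ext
    rw [key d k1 (by omega)]
    have := a.isLt
    split_ifs <;> omega
  have hbc' : b + (k2 : Fin n) = c := by
    apply Fin.ext
    rw [key b k2 (by omega)]
    split_ifs <;> omega
  let wA : G.Walk d a := (upWalk G hham d k1).copy rfl hda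
  let w1 : G.Walk b c := (upWalk G hham b k2).copy rfl hbc'
  let p : G.Walk d b := wA.append (Walk.cons hac w1.reverse)
  have hSA : ∀ x : Fin n, x ∈ wA.support ↔ (x.1 ≤ a.1 ∨ d.1 ≤ x.1) := by
    intro x
    rw [show wA.support = _ from Walk.support_copy _ _ _, upWalk_support, List.mem_map]
    constructor
    · rintro ⟨j, hj, rfl⟩
      rw [List.mem_range] at hj
      rw [key d j (by omega)]
      split_ifs <;> omega
    · intro hx
      rcases hx with hx | hx
      · refine ⟨n - d.1 + x.1, ?_, ?_⟩
        · rw [List.mem_range]; omega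
        · apply Fin.ext
          rw [key d _ (by omega)]
          split_ifs <;> omega
      · refine ⟨x.1 - d.1, ?_, ?_⟩
        · rw [List.mem_range]; have := x.isLt; omega
        · apply Fin.ext
          rw [key d _ (by have := x.isLt; omega)]
          have := x.isLt
          split_ifs <;> omega
  have hS1 : ∀ x : Fin n, x ∈ w1.support ↔ (b.1 ≤ x.1 ∧ x.1 ≤ c.1) := by
    intro x
    rw [show w1.support = _ from Walk.support_copy _ _ _, upWalk_support, List.mem_map]
    constructor
    · rintro ⟨j, hj, rfl⟩
      rw [List.mem_range] at hj
      rw [key b j (by omega)]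
      split_ifs <;> omega
    · intro hx
      refine ⟨x.1 - b.1, ?_, ?_⟩
      · rw [List.mem_range]; omega
      · apply Fin.ext
        rw [key b _ (by omega)]
        split_ifs <;> omega
  have hpsupp : p.support = wA.support ++ w1.reverse.support := by
    rw [Walk.support_append, Walk.support_cons, List.tail_cons]
  refine ⟨b, Walk.cons hbd p, ?_, ?_, ?_⟩
  · rw [Walk.cons_isCycle_iff]
    constructor
    · rw [Walk.isPath_def, hpsupp]
      rw [List.nodup_append]
      refine ⟨?_, ?_, ?_⟩
      · rw [show wA.support = _ from Walk.support_copy _ _ _]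
        exact upWalk_support_nodup hham d hk1n
      · rw [Walk.support_reverse, List.nodup_reverse,
          show w1.support = _ from Walk.support_copy _ _ _]
        exact upWalk_support_nodup hham b hk2n
      · intro x hx x' hx' hxx'
        subst hxx'
        rw [Walk.support_reverse, List.mem_reverse] at hx'
        rw [hSA] at hx
        rw [hS1] at hx'
        omega
    · intro hmem
      rw [show p.edges = _ from Walk.edges_append _ _, Walk.edges_cons,
        show wA.edges = _ from Walk.edges_copy _ _ _, upWalk_edges,
        Walk.edges_reverse, List.mem_append, List.mem_cons, List.mem_reverse,
        show w1.edges = _ from Walk.edges_copy _ _ _, upWalk_edges] at hmem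
      rcases hmem with hmem | hmem | hmem
      · rw [List.mem_map] at hmem
        obtain ⟨j, hj, heq⟩ := hmem
        rw [List.mem_range] at hj
        have hplus : d + (j : Fin n) + 1 = d + ((j+1 : ℕ) : Fin n) := by push_cast; abel
        rw [hplus, Sym2.eq_iff] at heq
        have e1 := key d j (by omega)
        have e2 := key d (j+1) (by omega)
        rcases heq with ⟨h1, h2⟩ | ⟨h1, h2⟩ <;>
          [(have v1 := congrArg Fin.val h1; have v2 := congrArg Fin.val h2);
           (have v1 := congrArg Fin.val h1; have v2 := congrArg Fin.val h2)] <;>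
          rw [e1] at v1 <;> rw [e2] at v2 <;> split_ifs at v1 v2 <;> omega
      · rw [Sym2.eq_iff] at hmem
        rcases hmem with ⟨h1, h2⟩ | ⟨h1, h2⟩ <;>
          [(have v1 := congrArg Fin.val h1); (have v1 := congrArg Fin.val h1)] <;> omega
      · rw [List.mem_map] at hmem
        obtain ⟨j, hj, heq⟩ := hmem
        rw [List.mem_range] at hj
        have hplus : b + (j : Fin n) + 1 = b + ((j+1 : ℕ) : Fin n) := by push_cast; abel
        rw [hplus, Sym2.eq_iff] at heq
        have e1 := key b j (by omega)
        have e2 := key b (j+1) (by omega)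
        rcases heq with ⟨h1, h2⟩ | ⟨h1, h2⟩ <;>
          [(have v1 := congrArg Fin.val h1; have v2 := congrArg Fin.val h2);
           (have v1 := congrArg Fin.val h1; have v2 := congrArg Fin.val h2)] <;>
          rw [e1] at v1 <;> rw [e2] at v2 <;> split_ifs at v1 v2 <;> omega
  · rw [Walk.length_cons,
      show p.length = _ from Walk.length_append _ _, Walk.length_cons,
      Walk.length_reverse,
      show wA.length = _ from Walk.length_copy _ _ _,
      show w1.length = _ from Walk.length_copy _ _ _,
      upWalk_length, upWalk_length]
    omega
  · ext x
    have hx := x.isLt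
    simp only [List.mem_toFinset, Finset.mem_filter, Finset.mem_univ, true_and,
      Walk.support_cons, List.mem_cons, hpsupp, List.mem_append,
      Walk.support_reverse, List.mem_reverse, hSA, hS1, Fin.lt_def, Fin.ext_iff]
    omega
end

section
/- Let G be a graph on n vertices with a Hamilton cycle v_0, v_1, …, v_{n−1}, v_0, and let a_1 < a_2 < b_1 < b_2 < c_1 < c_2 be indices in {0, …, n−1} such that {v_{a_1}, v_{b_1}}, {v_{a_2}, v_{c_1}}, and {v_{b_2}, v_{c_2}} are edges of G. Then G contains a cycle of length n − (a_2 − a_1 − 1) − (b_2 − b_1 − 1) − (c_2 − c_1 − 1); in particular, this cycle contains all vertices of G except those v_i with a_1 < i < a_2 or b_1 < i < b_2 or c_1 < i < c_2. -/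
open SimpleGraph
open Fin.NatCast
open Fin.CommRing

namespace CycleAux

variable {n : ℕ} [NeZero n] {G : SimpleGraph (Fin n)}

def pathUp (hham : ∀ i : Fin n, G.Adj i (i + 1)) (x : Fin n) :
    (k : ℕ) → G.Walk x (x + (k : Fin n))
  | 0 => Walk.nil.copy rfl (by simp)
  | (k+1) => (Walk.cons (hham x) (pathUp hham (x+1) k)).copy rfl (by push_cast; ring)

@[simp] lemma pathUp_length (hham : ∀ i : Fin n, G.Adj i (i + 1)) (x : Fin n) (k : ℕ) :
    (pathUp hham x k).length = k := by
  induction k generalizing x with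
  | zero => simp [pathUp]
  | succ k ih => simp [pathUp, ih]

lemma pathUp_support (hham : ∀ i : Fin n, G.Adj i (i + 1)) (x : Fin n) (k : ℕ) :
    (pathUp hham x k).support = (List.range (k+1)).map (fun (j:ℕ) => x + (j : Fin n)) := by
  induction k generalizing x with
  | zero => simp [pathUp, List.range_succ]
  | succ k ih =>
    rw [pathUp]
    rw [Walk.support_copy, Walk.support_cons, ih]
    rw [List.range_succ_eq_map (n := k+1), List.map_cons, List.map_map]
    congr 1
    · push_cast; ring
    · apply List.map_congr_left
      intro j _
      show x + 1 + (j : Fin n) = x + ((j+1 : ℕ) : Fin n)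
      push_cast; ring

lemma pathUp_edges (hham : ∀ i : Fin n, G.Adj i (i + 1)) (x : Fin n) (k : ℕ) :
    (pathUp hham x k).edges =
      (List.range k).map (fun (j:ℕ) => s(x + (j : Fin n), x + (j : Fin n) + 1)) := by
  induction k generalizing x with
  | zero => simp [pathUp]
  | succ k ih =>
    rw [pathUp]
    rw [Walk.edges_copy, Walk.edges_cons, ih]
    rw [List.range_succ_eq_map (n := k), List.map_cons, List.map_map]
    congr 1
    · push_cast; ring_nf
    · apply List.map_congr_left
      intro j _
      show s(x + 1 + (j:Fin n), x + 1 + (j:Fin n) + 1) = s(x + ((j+1:ℕ):Fin n), x + ((j+1:ℕ):Fin n) + 1)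
      push_cast; ring_nf

lemma val_add_cast (x : Fin n) (j : ℕ) (hj : j < n) :
    (x + (j : Fin n)).val = ((x : ℕ) + j) % n := by
  rw [Fin.val_add, Fin.val_natCast, Nat.mod_eq_of_lt hj]

lemma val_add_of_lt (x : Fin n) (j : ℕ) (h : (x : ℕ) + j < n) :
    (x + (j : Fin n)).val = (x : ℕ) + j := by
  rw [val_add_cast x j (by omega), Nat.mod_eq_of_lt h]

lemma val_add_of_ge (x : Fin n) (j : ℕ) (hj : j < n) (h : n ≤ (x : ℕ) + j) :
    (x + (j : Fin n)).val = (x : ℕ) + j - n := by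
  have hx := x.isLt
  rw [val_add_cast x j hj, Nat.mod_eq_sub_mod h, Nat.mod_eq_of_lt (by omega)]


lemma val_add_eval (x : Fin n) (j : ℕ) (hj : j < n) :
    (x + (j : Fin n)).val = if (x : ℕ) + j < n then (x : ℕ) + j else (x : ℕ) + j - n := by
  split
  · exact val_add_of_lt x j ‹_›
  · exact val_add_of_ge x j hj (by omega)

lemma mem_seg (x i : Fin n) (d : ℕ) (hd : d < n) :
    i ∈ (List.range (d+1)).map (fun (j:ℕ) => x + (j : Fin n)) ↔
      ((x:ℕ) ≤ i.val ∧ i.val ≤ (x:ℕ) + d) ∨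
      (n ≤ (x:ℕ) + d ∧ i.val ≤ (x:ℕ) + d - n) := by
  have hx := x.isLt
  have hi := i.isLt
  simp only [List.mem_map, List.mem_range]
  constructor
  · rintro ⟨j, hj, rfl⟩
    have := val_add_eval x j (by omega)
    split_ifs at this <;> rw [this] <;> omega
  · intro h
    rcases le_or_gt (x:ℕ) i.val with hle | hlt
    · refine ⟨i.val - (x:ℕ), by omega, Fin.ext ?_⟩
      rw [val_add_eval x _ (by omega)]
      split_ifs <;> omega
    · have h2 : i.val ≤ (x:ℕ) + d - n := by omega
      have h3 : n ≤ (x:ℕ) + d := by omega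
      refine ⟨n - (x:ℕ) + i.val, by omega, Fin.ext ?_⟩
      rw [val_add_eval x _ (by omega)]
      split_ifs <;> omega

end CycleAux

open CycleAux

/-- Let `G` be a graph on `n` vertices whose vertices are labeled `0, …, n-1` along a
Hamilton cycle (so `i` is adjacent to `i+1` mod `n` for every `i`).  If
`a₁ < a₂ < b₁ < b₂ < c₁ < c₂` are indices with `{v_{a₁}, v_{b₁}}`, `{v_{a₂}, v_{c₁}}`
and `{v_{b₂}, v_{c₂}}` edges of `G`, then `G` contains a cycle of length
`n - (a₂-a₁-1) - (b₂-b₁-1) - (c₂-c₁-1)` whose vertex set consists of all vertices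
except those `i` with `a₁ < i < a₂`, `b₁ < i < b₂` or `c₁ < i < c₂`. -/
theorem cycle_of_semi_triangle {n : ℕ} [NeZero n]
    (G : SimpleGraph (Fin n)) (hham : ∀ i : Fin n, G.Adj i (i + 1))
    (a₁ a₂ b₁ b₂ c₁ c₂ : Fin n)
    (h₁ : a₁ < a₂) (h₂ : a₂ < b₁) (h₃ : b₁ < b₂) (h₄ : b₂ < c₁) (h₅ : c₁ < c₂)
    (e₁ : G.Adj a₁ b₁) (e₂ : G.Adj a₂ c₁) (e₃ : G.Adj b₂ c₂) :
    ∃ (u : Fin n) (cyc : G.Walk u u), cyc.IsCycle ∧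
      cyc.length =
        n - ((a₂ : ℕ) - (a₁ : ℕ) - 1) - ((b₂ : ℕ) - (b₁ : ℕ) - 1)
          - ((c₂ : ℕ) - (c₁ : ℕ) - 1) ∧
      cyc.support.toFinset =
        Finset.univ.filter (fun i : Fin n =>
          ¬ ((a₁ < i ∧ i < a₂) ∨ (b₁ < i ∧ i < b₂) ∨ (c₁ < i ∧ i < c₂))) := by
  have H1 : (a₁:ℕ) < (a₂:ℕ) := h₁
  have H2 : (a₂:ℕ) < (b₁:ℕ) := h₂
  have H3 : (b₁:ℕ) < (b₂:ℕ) := h₃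
  have H4 : (b₂:ℕ) < (c₁:ℕ) := h₄
  have H5 : (c₁:ℕ) < (c₂:ℕ) := h₅
  have Hn : (c₂:ℕ) < n := c₂.isLt
  set d₁ : ℕ := (b₁:ℕ) - (a₂:ℕ) with hd₁
  set d₂ : ℕ := (c₁:ℕ) - (b₂:ℕ) with hd₂
  set d₃ : ℕ := n - (c₂:ℕ) + (a₁:ℕ) with hd₃
  have hkey1 : a₂ + (d₁ : Fin n) = b₁ := by
    apply Fin.ext; rw [val_add_of_lt a₂ d₁ (by omega)]; omega
  have hkey2 : b₂ + (d₂ : Fin n) = c₁ := by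
    apply Fin.ext; rw [val_add_of_lt b₂ d₂ (by omega)]; omega
  have hkey3 : c₂ + (d₃ : Fin n) = a₁ := by
    apply Fin.ext; rw [val_add_of_ge c₂ d₃ (by omega) (by omega)]; omega
  set seg1 : G.Walk a₂ b₁ := (pathUp hham a₂ d₁).copy rfl hkey1 with hseg1
  set seg2 : G.Walk b₂ c₁ := (pathUp hham b₂ d₂).copy rfl hkey2 with hseg2
  set seg3 : G.Walk c₂ a₁ := (pathUp hham c₂ d₃).copy rfl hkey3 with hseg3
  set rest : G.Walk b₁ a₁ :=
    seg1.reverse.append (SimpleGraph.Walk.cons e₂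
      (seg2.reverse.append (SimpleGraph.Walk.cons e₃ seg3))) with hrest
  have hsupp : rest.support =
      ((List.range (d₁+1)).map (fun (j:ℕ) => a₂ + (j : Fin n))).reverse ++
      (((List.range (d₂+1)).map (fun (j:ℕ) => b₂ + (j : Fin n))).reverse ++
        (List.range (d₃+1)).map (fun (j:ℕ) => c₂ + (j : Fin n))) := by
    rw [hrest, SimpleGraph.Walk.support_append, SimpleGraph.Walk.support_cons,
      List.tail_cons, SimpleGraph.Walk.support_append, SimpleGraph.Walk.support_cons,
      List.tail_cons, hseg1, hseg2, hseg3]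
    rw [SimpleGraph.Walk.support_reverse, SimpleGraph.Walk.support_copy,
      SimpleGraph.Walk.support_reverse, SimpleGraph.Walk.support_copy,
      SimpleGraph.Walk.support_copy, pathUp_support, pathUp_support, pathUp_support]
  have hmem : ∀ i : Fin n, i ∈ rest.support ↔
      (((a₂:ℕ) ≤ i.val ∧ i.val ≤ (b₁:ℕ)) ∨ ((b₂:ℕ) ≤ i.val ∧ i.val ≤ (c₁:ℕ)) ∨
        ((c₂:ℕ) ≤ i.val ∨ i.val ≤ (a₁:ℕ))) := by
    intro i
    have hi := i.isLt
    rw [hsupp]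
    simp only [List.mem_append, List.mem_reverse,
      mem_seg a₂ i d₁ (by omega), mem_seg b₂ i d₂ (by omega), mem_seg c₂ i d₃ (by omega)]
    omega
  have hnodupseg : ∀ (x : Fin n) (d : ℕ), d < n →
      ((List.range (d+1)).map (fun (j:ℕ) => x + (j : Fin n))).Nodup := by
    intro x d hd
    apply List.Nodup.map_on ?_ (List.nodup_range (n := _))
    intro j1 hj1 j2 hj2 heq
    simp only [List.mem_range] at hj1 hj2
    have hx := x.isLt
    have := congrArg Fin.val heq
    rw [val_add_eval x j1 (by omega), val_add_eval x j2 (by omega)] at this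
    split_ifs at this <;> omega
  have hpath : rest.IsPath := by
    apply SimpleGraph.Walk.IsPath.mk'
    rw [hsupp]
    refine List.Nodup.append ?_ (List.Nodup.append ?_ ?_ ?_) ?_
    · exact List.nodup_reverse.mpr (hnodupseg a₂ d₁ (by omega))
    · exact List.nodup_reverse.mpr (hnodupseg b₂ d₂ (by omega))
    · exact hnodupseg c₂ d₃ (by omega)
    · intro v hv1 hv2
      rw [List.mem_reverse, mem_seg b₂ v d₂ (by omega)] at hv1
      rw [mem_seg c₂ v d₃ (by omega)] at hv2
      have := v.isLt; omega
    · intro v hv1 hv2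
      rw [List.mem_reverse, mem_seg a₂ v d₁ (by omega)] at hv1
      rw [List.mem_append, List.mem_reverse, mem_seg b₂ v d₂ (by omega),
        mem_seg c₂ v d₃ (by omega)] at hv2
      have := v.isLt; omega
  have shift : ∀ (x : Fin n) (j : ℕ), x + (j : Fin n) + 1 = x + ((j+1 : ℕ) : Fin n) := by
    intro x j; push_cast; ring
  have hedge : ¬ s(a₁, b₁) ∈ rest.edges := by
    rw [hrest]
    simp only [hseg1, hseg2, hseg3, SimpleGraph.Walk.edges_append, SimpleGraph.Walk.edges_cons,
      SimpleGraph.Walk.edges_reverse, SimpleGraph.Walk.edges_copy, pathUp_edges,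
      List.mem_append, List.mem_reverse, List.mem_cons, List.mem_map, List.mem_range]
    push_neg
    refine ⟨?_, ?_, ?_, ?_, ?_⟩
    · rintro j hj heq
      rw [shift, Sym2.eq_iff] at heq
      rcases heq with ⟨ha, hb⟩ | ⟨ha, hb⟩ <;>
      · have va := congrArg Fin.val ha
        have vb := congrArg Fin.val hb
        rw [val_add_eval a₂ j (by omega)] at va <;> rw [val_add_eval a₂ (j+1) (by omega)] at vb
        split_ifs at va vb <;> omega
    · intro heq
      rw [Sym2.eq_iff] at heq
      rcases heq with ⟨ha, hb⟩ | ⟨ha, hb⟩ <;>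
        simp only [Fin.ext_iff] at ha hb <;> omega
    · rintro j hj heq
      rw [shift, Sym2.eq_iff] at heq
      rcases heq with ⟨ha, hb⟩ | ⟨ha, hb⟩ <;>
      · have va := congrArg Fin.val ha
        have vb := congrArg Fin.val hb
        rw [val_add_eval b₂ j (by omega)] at va <;> rw [val_add_eval b₂ (j+1) (by omega)] at vb
        split_ifs at va vb <;> omega
    · intro heq
      rw [Sym2.eq_iff] at heq
      rcases heq with ⟨ha, hb⟩ | ⟨ha, hb⟩ <;>
        simp only [Fin.ext_iff] at ha hb <;> omega
    · rintro j hj heq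
      rw [shift, Sym2.eq_iff] at heq
      rcases heq with ⟨ha, hb⟩ | ⟨ha, hb⟩ <;>
      · have va := congrArg Fin.val ha
        have vb := congrArg Fin.val hb
        rw [val_add_eval c₂ j (by omega)] at va <;> rw [val_add_eval c₂ (j+1) (by omega)] at vb
        split_ifs at va vb <;> omega
  refine ⟨a₁, SimpleGraph.Walk.cons e₁ rest, ?_, ?_, ?_⟩
  · rw [SimpleGraph.Walk.cons_isCycle_iff]
    exact ⟨hpath, hedge⟩
  · rw [SimpleGraph.Walk.length_cons, hrest]
    rw [hseg1, hseg2, hseg3]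
    simp only [SimpleGraph.Walk.length_append, SimpleGraph.Walk.length_cons,
      SimpleGraph.Walk.length_reverse, SimpleGraph.Walk.length_copy, hseg1, hseg2, hseg3,
      pathUp_length]
    omega
  · ext i
    have hi := i.isLt
    simp only [List.mem_toFinset, SimpleGraph.Walk.support_cons, List.mem_cons,
      Finset.mem_filter, Finset.mem_univ, true_and]
    rw [hmem i]
    have hlt : ∀ x y : Fin n, x < y ↔ (x:ℕ) < (y:ℕ) := fun x y => Iff.rfl
    rw [hlt, hlt, hlt, hlt, hlt, hlt, Fin.ext_iff]
    omega
end
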